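/- For all n ≥ k ≥ 1, χ_b(KS(n,k)) = n−k+1. -/

import Mathlib

/-- A signed `k`-subset of `[n]`: a `k`-subset `A` of `{±1,…,±n}` with `A ∩ (−A) = ∅`. -/
def IsSignedKSubset (n k : ℕ) (A : Finset ℤ) : Prop :=
  A.card = k ∧ (∀ a ∈ A, a ≠ 0 ∧ a.natAbs ≤ n) ∧ ∀ a ∈ A, -a ∉ A

/-- A set of nonzero integers is alternating if any two of its elements that are consecutive
in absolute value have opposite signs. -/
def IsAlternating (A : Finset ℤ) : Prop :=
  ∀ a ∈ A, ∀ b ∈ A, a.natAbs < b.natAbs →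
    (∀ c ∈ A, ¬(a.natAbs < c.natAbs ∧ c.natAbs < b.natAbs)) → (0 < a ↔ b < 0)

/-- The element of smallest absolute value is positive. -/
def FirstPos (A : Finset ℤ) : Prop :=
  ∀ a ∈ A, (∀ b ∈ A, a.natAbs ≤ b.natAbs) → 0 < a

/-- Positive adjacency in the signed Kneser graph: `A ∩ (−B) = ∅`. -/
def ksPos (A B : Finset ℤ) : Prop := ∀ a ∈ A, -a ∉ B

/-- Negative adjacency in the signed Kneser graph: `A ∩ B = ∅`. -/
def ksNeg (A B : Finset ℤ) : Prop := Disjoint A B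

/-- The vertices of the signed Kneser graph `KS(n,k)`. -/
def KSVertex (n k : ℕ) : Type := {A : Finset ℤ // IsSignedKSubset n k A}

/-- A set `S` of vertices of a signed graph is balanced if some switching makes all edges
inside `S` positive. -/
def IsBalancedSet {V : Type*} (pos neg : V → V → Prop) (S : Set V) : Prop :=
  ∃ X : Set V, ∀ u ∈ S, ∀ v ∈ S,
    (pos u v → ((u ∈ X) ↔ (v ∈ X))) ∧ (neg u v → ¬((u ∈ X) ↔ (v ∈ X)))

/-- The balanced chromatic number: the least `p` such that the vertex set can be partitioned
into `p` balanced sets. -/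
noncomputable def balancedChromatic {V : Type*} (pos neg : V → V → Prop) : ℕ :=
  sInf {p : ℕ | ∃ f : V → Fin p, ∀ i : Fin p, IsBalancedSet pos neg (f ⁻¹' {i})}

open Finset

attribute [local instance] Classical.propDecidable

namespace SKT

/-- negation of a finset of integers -/
def negF (x : Finset ℤ) : Finset ℤ := x.image (fun a => -a)

@[simp] lemma mem_negF {x : Finset ℤ} {a : ℤ} : a ∈ negF x ↔ -a ∈ x := by
  simp only [negF, Finset.mem_image]
  constructor
  · rintro ⟨b, hb, rfl⟩; simpa using hb
  · intro h; exact ⟨-a, h, by ring⟩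

@[simp] lemma negF_negF (x : Finset ℤ) : negF (negF x) = x := by
  ext a; simp

lemma negF_subset {x y : Finset ℤ} (h : x ⊆ y) : negF x ⊆ negF y := by
  intro a ha; rw [mem_negF] at *; exact h ha

@[simp] lemma card_negF (x : Finset ℤ) : (negF x).card = x.card :=
  Finset.card_image_of_injective _ neg_injective

lemma negF_erase (x : Finset ℤ) (a : ℤ) : negF (x.erase a) = (negF x).erase (-a) := by
  ext b
  simp only [mem_negF, Finset.mem_erase, mem_negF]
  constructor
  · rintro ⟨h1, h2⟩; exact ⟨fun h => h1 (by omega), h2⟩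
  · rintro ⟨h1, h2⟩; exact ⟨fun h => h1 (by omega), h2⟩

/-- a signed subset supported in `[j]` (not necessarily of size `k`) -/
def SSet (j : ℕ) (x : Finset ℤ) : Prop :=
  (∀ a ∈ x, a ≠ 0 ∧ a.natAbs ≤ j) ∧ ∀ a ∈ x, -a ∉ x

lemma SSet.mono {j j' : ℕ} (h : j ≤ j') {x : Finset ℤ} (hx : SSet j x) : SSet j' x :=
  ⟨fun a ha => ⟨(hx.1 a ha).1, le_trans (hx.1 a ha).2 h⟩, hx.2⟩

lemma SSet.subset {j : ℕ} {x y : Finset ℤ} (hxy : x ⊆ y) (hy : SSet j y) : SSet j x :=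
  ⟨fun a ha => hy.1 a (hxy ha), fun a ha h => hy.2 a (hxy ha) (hxy h)⟩

lemma SSet.negF {j : ℕ} {x : Finset ℤ} (hx : SSet j x) : SSet j (negF x) := by
  constructor
  · intro a ha
    rw [mem_negF] at ha
    obtain ⟨h1, h2⟩ := hx.1 _ ha
    exact ⟨fun h => h1 (by rw [h]; ring), by simpa using h2⟩
  · intro a ha h
    rw [mem_negF] at ha h
    simp only [neg_neg] at h
    exact hx.2 _ h (by simpa using ha)

/-- abs values are distinct within a signed set -/
lemma SSet.absInj {j : ℕ} {x : Finset ℤ} (hx : SSet j x) :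
    ∀ a ∈ x, ∀ b ∈ x, a.natAbs = b.natAbs → a = b := by
  intro a ha b hb hab
  rcases Int.natAbs_eq_natAbs_iff.1 hab with h | h
  · exact h
  · subst h
    exact absurd ha (by intro ha'; exact (hx.2 b hb ha').elim)

lemma SSet.card_le {j : ℕ} {x : Finset ℤ} (hx : SSet j x) : x.card ≤ j := by
  have h1 : x.image Int.natAbs ⊆ Finset.Icc 1 j := by
    intro m hm
    simp only [Finset.mem_image] at hm
    obtain ⟨a, ha, rfl⟩ := hm
    obtain ⟨ha1, ha2⟩ := hx.1 a ha
    simp only [Finset.mem_Icc]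
    exact ⟨by omega, ha2⟩
  have h2 : (x.image Int.natAbs).card = x.card :=
    Finset.card_image_of_injOn (fun a ha b hb hab => hx.absInj a ha b hb hab)
  calc x.card = (x.image Int.natAbs).card := h2.symm
    _ ≤ (Finset.Icc 1 j).card := Finset.card_le_card h1
    _ = j := by simp

/-- The finset of all nonempty signed subsets supported in `[j]`. -/
noncomputable def SS (j : ℕ) : Finset (Finset ℤ) :=
  ((Finset.Icc (-(j:ℤ)) j).powerset).filter (fun x => x.Nonempty ∧ SSet j x)

lemma mem_SS {j : ℕ} {x : Finset ℤ} : x ∈ SS j ↔ x.Nonempty ∧ SSet j x := by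
  simp only [SS, Finset.mem_filter, Finset.mem_powerset, and_iff_right_iff_imp]
  rintro ⟨-, hS⟩ a ha
  obtain ⟨h1, h2⟩ := hS.1 a ha
  simp only [Finset.mem_Icc]
  omega

lemma SS_mono {j j' : ℕ} (h : j ≤ j') : SS j ⊆ SS j' := by
  intro x hx
  rw [mem_SS] at *
  exact ⟨hx.1, hx.2.mono h⟩

lemma SS_zero : SS 0 = ∅ := by
  ext x
  simp only [mem_SS, Finset.notMem_empty, iff_false]
  rintro ⟨⟨a, ha⟩, hS⟩
  obtain ⟨h1, h2⟩ := hS.1 a ha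
  omega

lemma negF_mem_SS {j : ℕ} {x : Finset ℤ} (hx : x ∈ SS j) : negF x ∈ SS j := by
  rw [mem_SS] at *
  refine ⟨?_, hx.2.negF⟩
  obtain ⟨a, ha⟩ := hx.1
  exact ⟨-a, by simpa using ha⟩

/-- the upper hemisphere ball: members avoiding `-j` -/
noncomputable def Uball (j : ℕ) : Finset (Finset ℤ) :=
  (SS j).filter (fun x => (-(j:ℤ)) ∉ x)

lemma mem_Uball {j : ℕ} {x : Finset ℤ} : x ∈ Uball j ↔ x ∈ SS j ∧ (-(j:ℤ)) ∉ x :=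
  Finset.mem_filter

lemma SS_subset_Uball {j : ℕ} : SS j ⊆ Uball (j+1) := by
  intro x hx
  rw [mem_Uball]
  refine ⟨SS_mono (by omega) hx, fun h => ?_⟩
  obtain ⟨h1, h2⟩ := ((mem_SS.1 hx).2).1 _ h
  simp at h2
  omega

/-- chains of length `t` inside a region `R` -/
noncomputable def chainsIn (t : ℕ) (R : Finset (Finset ℤ)) : Finset (Finset (Finset ℤ)) :=
  R.powerset.filter (fun C => C.card = t ∧ ∀ u ∈ C, ∀ v ∈ C, u ⊆ v ∨ v ⊆ u)

lemma mem_chainsIn {t : ℕ} {R : Finset (Finset ℤ)} {C : Finset (Finset ℤ)} :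
    C ∈ chainsIn t R ↔ C ⊆ R ∧ C.card = t ∧ ∀ u ∈ C, ∀ v ∈ C, u ⊆ v ∨ v ⊆ u := by
  simp [chainsIn, Finset.mem_filter, Finset.mem_powerset, and_assoc]

section Alt

/-- alternating label sets, by fuel recursion -/
def AltAux : ℕ → ℤ → Finset ℤ → Prop
  | 0, _, L => L = ∅
  | (t+1), s, L => L = ∅ ∨ ∃ a ∈ L, 0 < s * a ∧
      (∀ b ∈ L, b ≠ a → a.natAbs < b.natAbs) ∧ AltAux t (-s) (L.erase a)

/-- `Alt s L` : the set `L` is alternating with first sign `s`. -/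
def Alt (s : ℤ) (L : Finset ℤ) : Prop := AltAux L.card s L

lemma altAux_congr : ∀ (t t' : ℕ) (s : ℤ) (L : Finset ℤ), L.card ≤ t → L.card ≤ t' →
    (AltAux t s L ↔ AltAux t' s L) := by
  intro t
  induction t with
  | zero =>
    intro t' s L h h'
    simp only [Nat.le_zero, Finset.card_eq_zero] at h
    subst h
    match t' with
    | 0 => rfl
    | (t''+1) => simp [AltAux]
  | succ t ih =>
    intro t' s L h h'
    match t' with
    | 0 =>
      simp only [Nat.le_zero, Finset.card_eq_zero] at h'
      subst h'
      simp [AltAux]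
    | (t''+1) =>
      simp only [AltAux]
      constructor
      · rintro (rfl | ⟨a, ha, h1, h2, h3⟩)
        · exact Or.inl rfl
        · refine Or.inr ⟨a, ha, h1, h2, ?_⟩
          exact (ih t'' (-s) (L.erase a) (by rw [Finset.card_erase_of_mem ha]; omega)
            (by rw [Finset.card_erase_of_mem ha]; omega)).mp h3
      · rintro (rfl | ⟨a, ha, h1, h2, h3⟩)
        · exact Or.inl rfl
        · refine Or.inr ⟨a, ha, h1, h2, ?_⟩
          exact (ih t'' (-s) (L.erase a) (by rw [Finset.card_erase_of_mem ha]; omega)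
            (by rw [Finset.card_erase_of_mem ha]; omega)).mpr h3

lemma alt_iff {s : ℤ} {L : Finset ℤ} :
    Alt s L ↔ (L = ∅ ∨ ∃ a ∈ L, 0 < s * a ∧
      (∀ b ∈ L, b ≠ a → a.natAbs < b.natAbs) ∧ Alt (-s) (L.erase a)) := by
  unfold Alt
  rcases Nat.eq_zero_or_pos L.card with h | h
  · rw [Finset.card_eq_zero] at h
    subst h
    simp [AltAux]
  · obtain ⟨t, ht⟩ : ∃ t, L.card = t + 1 := ⟨L.card - 1, by omega⟩
    rw [ht]
    simp only [AltAux]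
    constructor
    · rintro (rfl | ⟨a, ha, h1, h2, h3⟩)
      · exact Or.inl rfl
      · refine Or.inr ⟨a, ha, h1, h2, ?_⟩
        exact (altAux_congr t (L.erase a).card (-s) (L.erase a)
          (by rw [Finset.card_erase_of_mem ha]; omega) le_rfl).mp h3
    · rintro (rfl | ⟨a, ha, h1, h2, h3⟩)
      · exact Or.inl rfl
      · refine Or.inr ⟨a, ha, h1, h2, ?_⟩
        exact (altAux_congr (L.erase a).card t (-s) (L.erase a) le_rfl
          (by rw [Finset.card_erase_of_mem ha]; omega)).mp h3

@[simp] lemma alt_empty (s : ℤ) : Alt s (∅ : Finset ℤ) := by rw [alt_iff]; exact Or.inl rfl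

lemma alt_singleton {s a : ℤ} : Alt s ({a} : Finset ℤ) ↔ 0 < s * a := by
  rw [alt_iff]
  constructor
  · rintro (h | ⟨b, hb, h1, -, -⟩)
    · simp at h
    · simp only [Finset.mem_singleton] at hb; subst hb; exact h1
  · intro h
    exact Or.inr ⟨a, Finset.mem_singleton_self a, h, by simp, by simp⟩

/-- characterization of `Alt` via a given strict-min element -/
lemma alt_iff_of_min {s a₀ : ℤ} {L : Finset ℤ} (ha₀ : a₀ ∈ L)
    (hmin : ∀ b ∈ L, b ≠ a₀ → a₀.natAbs < b.natAbs) :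
    Alt s L ↔ (0 < s * a₀ ∧ Alt (-s) (L.erase a₀)) := by
  rw [alt_iff]
  constructor
  · rintro (h | ⟨a, ha, h1, h2, h3⟩)
    · subst h; simp at ha₀
    · have : a = a₀ := by
        by_contra hne
        exact absurd (hmin a ha hne) (by have := h2 a₀ ha₀ (Ne.symm hne); omega)
      subst this
      exact ⟨h1, h3⟩
  · rintro ⟨h1, h2⟩
    exact Or.inr ⟨a₀, ha₀, h1, hmin, h2⟩

lemma alt_negF : ∀ (L : Finset ℤ) (s : ℤ), Alt s L → Alt (-s) (negF L) := by
  intro L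
  induction L using Finset.strongInduction with
  | _ L ih =>
    intro s h
    rw [alt_iff] at h
    rcases h with rfl | ⟨a, ha, h1, h2, h3⟩
    · simp [negF]
    · rw [alt_iff]
      refine Or.inr ⟨-a, by simpa using ha, by nlinarith, ?_, ?_⟩
      · intro b hb hne
        rw [mem_negF] at hb
        have := h2 (-b) hb (by omega)
        simpa using this
      · have := ih (L.erase a) (Finset.erase_ssubset ha) (-s) h3
        rw [negF_erase] at this
        exact this

lemma alt_not_both {s : ℤ} {L : Finset ℤ} (hL : L.Nonempty) (h1 : Alt s L) (h2 : Alt (-s) L) :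
    False := by
  rw [alt_iff] at h1 h2
  rcases h1 with rfl | ⟨a, ha, ha1, ha2, -⟩
  · simp at hL
  rcases h2 with h | ⟨b, hb, hb1, hb2, -⟩
  · subst h; simp at ha
  have : a = b := by
    by_contra hne
    have := ha2 b hb (Ne.symm hne)
    have := hb2 a ha hne
    omega
  subst this
  nlinarith

lemma exists_minAbs {L : Finset ℤ} (hL : L.Nonempty)
    (habs : ∀ a ∈ L, ∀ b ∈ L, a.natAbs = b.natAbs → a = b) :
    ∃ a₀ ∈ L, ∀ b ∈ L, b ≠ a₀ → a₀.natAbs < b.natAbs := by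
  have hne : (L.image Int.natAbs).Nonempty := hL.image _
  obtain ⟨a₀, ha₀, hval⟩ := Finset.mem_image.1 (Finset.min'_mem _ hne)
  refine ⟨a₀, ha₀, fun b hb hne' => ?_⟩
  have h1 : a₀.natAbs ≤ b.natAbs := by
    rw [hval]
    exact Finset.min'_le _ _ (Finset.mem_image_of_mem _ hb)
  rcases lt_or_eq_of_le h1 with h | h
  · exact h
  · exact absurd (habs a₀ ha₀ b hb h) (Ne.symm hne')

/-- the key parity count for alternating faces of a label set -/
lemma g_parity : ∀ (N : ℕ) (L : Finset ℤ), L.card ≤ N → L.Nonempty →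
    (∀ a ∈ L, a ≠ 0) →
    (∀ a ∈ L, ∀ b ∈ L, a.natAbs = b.natAbs → a = b) → ∀ s : ℤ, (s = 1 ∨ s = -1) →
    (L.filter (fun a => Alt s (L.erase a))).card % 2 =
      (if Alt s L ∨ Alt (-s) L then 1 else 0) := by
  intro N
  induction N with
  | zero => intro L hcard hne; simp [Finset.card_eq_zero.1 (Nat.le_zero.1 hcard)] at hne
  | succ N ih =>
    intro L hcard hne hnz habs s hs
    obtain ⟨a₀, ha₀, hmin⟩ := exists_minAbs hne habs
    set M := L.erase a₀ with hM
    have hLM : L = insert a₀ M := by rw [hM, Finset.insert_erase ha₀]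
    have ha₀M : a₀ ∉ M := Finset.notMem_erase _ _
    have hsa : s * a₀ ≠ 0 := by
      have := hnz a₀ ha₀
      rcases hs with rfl | rfl <;> simpa using this
    -- the filter over M
    have hMfilter : ∀ b ∈ M, (Alt s (L.erase b) ↔ (0 < s * a₀ ∧ Alt (-s) (M.erase b))) := by
      intro b hb
      have hbL : b ∈ L := Finset.mem_of_mem_erase hb
      have hbne : b ≠ a₀ := Finset.ne_of_mem_erase hb
      have ha₀' : a₀ ∈ L.erase b := Finset.mem_erase.2 ⟨Ne.symm hbne, ha₀⟩
      rw [alt_iff_of_min ha₀' (fun c hc hcne => hmin c (Finset.mem_of_mem_erase hc) hcne)]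
      rw [Finset.erase_right_comm]
    have hcount : (L.filter (fun a => Alt s (L.erase a))).card =
        (if Alt s M then 1 else 0) +
        (if 0 < s * a₀ then (M.filter (fun b => Alt (-s) (M.erase b))).card else 0) := by
      have hMeq : (M.filter (fun a => Alt s (L.erase a))).card =
          (if 0 < s * a₀ then (M.filter (fun b => Alt (-s) (M.erase b))).card else 0) := by
        by_cases hpos : 0 < s * a₀
        · rw [if_pos hpos]
          congr 1
          apply Finset.filter_congr
          intro b hb
          simp only [hMfilter b hb, eq_iff_iff]
          constructor
          · rintro ⟨-, h⟩; exact h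
          · exact fun h => ⟨hpos, h⟩
        · rw [if_neg hpos]
          rw [Finset.card_eq_zero, Finset.filter_eq_empty_iff]
          intro b hb
          rw [hMfilter b hb]
          tauto
      conv_lhs => rw [hLM]
      rw [Finset.filter_insert]
      have hrest : (M.filter (fun a => Alt s ((insert a₀ M).erase a))).card =
          (if 0 < s * a₀ then (M.filter (fun b => Alt (-s) (M.erase b))).card else 0) := by
        rw [← hMeq]
        congr 1
        apply Finset.filter_congr
        intro b hb
        rw [← hLM]
      by_cases hA' : Alt s M
      · have hA : Alt s ((insert a₀ M).erase a₀) := by rwa [Finset.erase_insert ha₀M]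
        rw [if_pos hA, Finset.card_insert_of_notMem (fun hmem => ha₀M (Finset.mem_of_mem_filter _ hmem)),
          hrest, if_pos hA']
        omega
      · have hA : ¬ Alt s ((insert a₀ M).erase a₀) := by rwa [Finset.erase_insert ha₀M]
        rw [if_neg hA, hrest, if_neg hA']
        omega
    have hAltL : Alt s L ↔ (0 < s * a₀ ∧ Alt (-s) M) := alt_iff_of_min ha₀ hmin
    have hAltL' : Alt (-s) L ↔ (0 < -(s * a₀) ∧ Alt s M) := by
      rw [alt_iff_of_min ha₀ hmin, neg_neg, ← hM, show -s * a₀ = -(s * a₀) by ring]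
    rcases Finset.eq_empty_or_nonempty M with hMe | hMne
    · -- singleton case
      have hTrue : Alt s L ∨ Alt (-s) L := by
        rw [hAltL, hAltL', hMe]
        rcases lt_or_gt_of_ne hsa with h | h
        · exact Or.inr ⟨by omega, alt_empty _⟩
        · exact Or.inl ⟨by omega, alt_empty _⟩
      rw [hcount, hMe, if_pos hTrue]
      simp
    · -- inductive case
      have hMcard : M.card ≤ N := by
        rw [hM, Finset.card_erase_of_mem ha₀]
        omega
      have hIH := ih M hMcard hMne (fun a ha => hnz a (Finset.mem_of_mem_erase ha))
        (fun a ha b hb => habs a (Finset.mem_of_mem_erase ha) b (Finset.mem_of_mem_erase hb))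
        (-s) (by rcases hs with rfl | rfl <;> simp)
      rw [neg_neg] at hIH
      rw [hcount]
      by_cases hpos : 0 < s * a₀
      · rw [if_pos hpos]
        have h2 : ¬ Alt (-s) L := by rw [hAltL']; push_neg; intro h; omega
        by_cases hsM : Alt s M
        · have hnotM : ¬ Alt (-s) M := fun h => alt_not_both hMne hsM h
          have h1 : ¬ Alt s L := by rw [hAltL]; push_neg; intro _; exact hnotM
          rw [if_pos hsM, if_neg (by tauto : ¬(Alt s L ∨ Alt (-s) L))]
          rw [if_pos (Or.inr hsM)] at hIH
          omega
        · rw [if_neg hsM]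
          have h1 : Alt s L ↔ Alt (-s) M := by
            rw [hAltL]
            exact ⟨fun h => h.2, fun h => ⟨hpos, h⟩⟩
          by_cases hM2 : Alt (-s) M
          · rw [if_pos (Or.inl (h1.mpr hM2))]
            rw [if_pos (Or.inl hM2)] at hIH
            omega
          · rw [if_neg (by tauto : ¬(Alt s L ∨ Alt (-s) L))]
            rw [if_neg (by tauto : ¬(Alt (-s) M ∨ Alt s M))] at hIH
            omega
      · rw [if_neg hpos]
        have h1 : ¬ Alt s L := by rw [hAltL]; push_neg; intro h; omega
        have h2 : Alt (-s) L ↔ Alt s M := by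
          rw [hAltL']
          refine ⟨fun h => h.2, fun h => ⟨?_, h⟩⟩
          rcases lt_or_gt_of_ne hsa with hlt | hgt
          · omega
          · omega
        by_cases hsM : Alt s M
        · rw [if_pos hsM, if_pos (Or.inr (h2.mpr hsM))]
        · rw [if_neg hsM, if_neg (by tauto : ¬(Alt s L ∨ Alt (-s) L))]

end Alt

section Tucker

variable (lab : Finset ℤ → ℤ)

/-- alternating chains (with respect to labels) -/
def AltC (s : ℤ) (C : Finset (Finset ℤ)) : Prop :=
  (C.image lab).card = C.card ∧ Alt s (C.image lab)

variable {n : ℕ}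
variable (hnz : ∀ x ∈ SS n, lab x ≠ 0)
  (hcomp : ∀ x ∈ SS n, ∀ y ∈ SS n, x ⊆ y → lab x ≠ -lab y)

include hnz hcomp in
/-- Key face-counting parity for a single chain. -/
lemma chain_face_parity {C : Finset (Finset ℤ)} (hCS : C ⊆ SS n)
    (hch : ∀ u ∈ C, ∀ v ∈ C, u ⊆ v ∨ v ⊆ u) (hCne : C.Nonempty) :
    (C.filter (fun v => AltC lab 1 (C.erase v))).card % 2 =
      if (AltC lab 1 C ∨ AltC lab (-1) C) then 1 else 0 := by
  have hcompC : ∀ u ∈ C, ∀ v ∈ C, u ≠ v → lab u ≠ -lab v := by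
    intro u hu v hv hne
    rcases hch u hu v hv with h | h
    · exact hcomp u (hCS hu) v (hCS hv) h
    · intro heq
      exact hcomp v (hCS hv) u (hCS hu) h (by omega)
  by_cases hinj : ∀ u ∈ C, ∀ v ∈ C, lab u = lab v → u = v
  · -- injective case : transfer to the label set
    set L := C.image lab with hL
    have himcard : L.card = C.card := Finset.card_image_of_injOn (fun u hu v hv h => hinj u hu v hv h)
    have hLnz : ∀ a ∈ L, a ≠ 0 := by
      rintro a ha
      obtain ⟨u, hu, rfl⟩ := Finset.mem_image.1 ha
      exact hnz u (hCS hu)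
    have habs : ∀ a ∈ L, ∀ b ∈ L, a.natAbs = b.natAbs → a = b := by
      rintro a ha b hb hab
      obtain ⟨u, hu, rfl⟩ := Finset.mem_image.1 ha
      obtain ⟨v, hv, rfl⟩ := Finset.mem_image.1 hb
      rcases Int.natAbs_eq_natAbs_iff.1 hab with h | h
      · exact h
      · by_cases huv : u = v
        · subst huv
          have := hnz u (hCS hu)
          omega
        · exact absurd h (hcompC u hu v hv huv)
    have himerase : ∀ v ∈ C, (C.erase v).image lab = L.erase (lab v) := by
      intro v hv
      ext a
      constructor
      · intro ha
        obtain ⟨w, hw, rfl⟩ := Finset.mem_image.1 ha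
        obtain ⟨hw1, hw2⟩ := Finset.mem_erase.1 hw
        exact Finset.mem_erase.2 ⟨fun h => hw1 (hinj w hw2 v hv h),
          Finset.mem_image_of_mem _ hw2⟩
      · intro ha
        obtain ⟨h1, ha2⟩ := Finset.mem_erase.1 ha
        obtain ⟨w, hw, rfl⟩ := Finset.mem_image.1 ha2
        exact Finset.mem_image.2 ⟨w, Finset.mem_erase.2 ⟨fun h => h1 (by rw [h]), hw⟩, rfl⟩
    have htrans : ∀ v ∈ C, (AltC lab 1 (C.erase v) ↔ Alt 1 (L.erase (lab v))) := by
      intro v hv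
      unfold AltC
      rw [himerase v hv]
      have : (L.erase (lab v)).card = (C.erase v).card := by
        rw [Finset.card_erase_of_mem (Finset.mem_image_of_mem _ hv),
          Finset.card_erase_of_mem hv, himcard]
      simp [this]
    have hcards : (C.filter (fun v => AltC lab 1 (C.erase v))).card =
        (L.filter (fun a => Alt 1 (L.erase a))).card := by
      apply Finset.card_bij (fun v _ => lab v)
      · intro v hv
        obtain ⟨hv1, hv2⟩ := Finset.mem_filter.1 hv
        exact Finset.mem_filter.2 ⟨Finset.mem_image_of_mem _ hv1, ((htrans v hv1).1 hv2)⟩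
      · intro u hu v hv h
        exact hinj u (Finset.mem_of_mem_filter _ hu) v (Finset.mem_of_mem_filter _ hv) h
      · intro a ha
        obtain ⟨ha1, ha2⟩ := Finset.mem_filter.1 ha
        obtain ⟨v, hv, rfl⟩ := Finset.mem_image.1 ha1
        exact ⟨v, Finset.mem_filter.2 ⟨hv, (htrans v hv).2 ha2⟩, rfl⟩
    have hRHS : ∀ s : ℤ, (AltC lab s C ↔ Alt s L) := by
      intro s
      unfold AltC
      simp [← hL, himcard]
    rw [hcards, hRHS, hRHS]
    exact g_parity L.card L le_rfl (hCne.image _) hLnz habs 1 (Or.inl rfl)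
  · -- duplicate-label case
    push_neg at hinj
    obtain ⟨u, hu, v, hv, hlabeq, huv⟩ := hinj
    have hRHS : ¬ (AltC lab 1 C ∨ AltC lab (-1) C) := by
      rintro (⟨h1, -⟩ | ⟨h1, -⟩) <;>
      · have := Finset.injOn_of_card_image_eq h1
        exact huv (this hu hv hlabeq)
    rw [if_neg hRHS]
    have hsub : ∀ w ∈ C, AltC lab 1 (C.erase w) → (w = u ∨ w = v) := by
      intro w hw hAlt
      obtain ⟨h1, -⟩ := hAlt
      by_contra hcon
      push_neg at hcon
      have hinj2 := Finset.injOn_of_card_image_eq h1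
      have hu' : u ∈ C.erase w := Finset.mem_erase.2 ⟨fun h => hcon.1 h.symm, hu⟩
      have hv' : v ∈ C.erase w := Finset.mem_erase.2 ⟨fun h => hcon.2 h.symm, hv⟩
      exact huv (hinj2 hu' hv' hlabeq)
    have himeq : (C.erase u).image lab = (C.erase v).image lab := by
      ext a
      simp only [Finset.mem_image]
      constructor
      · rintro ⟨w, hw, rfl⟩
        obtain ⟨hw1, hw2⟩ := Finset.mem_erase.1 hw
        by_cases h : w = v
        · subst h
          exact ⟨u, Finset.mem_erase.2 ⟨huv, hu⟩, hlabeq⟩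
        · exact ⟨w, Finset.mem_erase.2 ⟨h, hw2⟩, rfl⟩
      · rintro ⟨w, hw, rfl⟩
        obtain ⟨hw1, hw2⟩ := Finset.mem_erase.1 hw
        by_cases h : w = u
        · subst h
          exact ⟨v, Finset.mem_erase.2 ⟨Ne.symm huv, hv⟩, hlabeq.symm⟩
        · exact ⟨w, Finset.mem_erase.2 ⟨h, hw2⟩, rfl⟩
    have hiff : AltC lab 1 (C.erase u) ↔ AltC lab 1 (C.erase v) := by
      unfold AltC
      rw [himeq, Finset.card_erase_of_mem hu, Finset.card_erase_of_mem hv]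
    by_cases hcase : AltC lab 1 (C.erase u)
    · have : C.filter (fun w => AltC lab 1 (C.erase w)) = {u, v} := by
        apply Finset.Subset.antisymm
        · intro w hw
          obtain ⟨hw1, hw2⟩ := Finset.mem_filter.1 hw
          rcases hsub w hw1 hw2 with rfl | rfl <;> simp
        · intro w hw
          rcases Finset.mem_insert.1 hw with rfl | hw'
          · exact Finset.mem_filter.2 ⟨hu, hcase⟩
          · rw [Finset.mem_singleton] at hw'
            subst hw'
            exact Finset.mem_filter.2 ⟨hv, hiff.1 hcase⟩
      rw [this, Finset.card_insert_of_notMem (by simpa using huv), Finset.card_singleton]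
    · have : C.filter (fun w => AltC lab 1 (C.erase w)) = ∅ := by
        rw [Finset.filter_eq_empty_iff]
        intro w hw hcon
        rcases hsub w hw hcon with rfl | rfl
        · exact hcase hcon
        · exact hcase (hiff.2 hcon)
      rw [this]
      simp

end Tucker

section ChainStruct

lemma chain_linear {C : Finset (Finset ℤ)}
    (hch : ∀ u ∈ C, ∀ v ∈ C, u ⊆ v ∨ v ⊆ u) :
    ∀ u ∈ C, ∀ v ∈ C, u.card ≤ v.card → u ⊆ v := by
  intro u hu v hv hle
  rcases hch u hu v hv with h | h
  · exact h
  · rw [Finset.eq_of_subset_of_card_le h hle]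

lemma chain_cards_injOn {C : Finset (Finset ℤ)}
    (hch : ∀ u ∈ C, ∀ v ∈ C, u ⊆ v ∨ v ⊆ u) :
    Set.InjOn Finset.card (C : Set (Finset ℤ)) := by
  intro u hu v hv h
  rcases hch u hu v hv with h' | h'
  · exact Finset.eq_of_subset_of_card_le h' (le_of_eq h.symm)
  · exact (Finset.eq_of_subset_of_card_le h' (le_of_eq h)).symm

lemma chain_cards_sub {j : ℕ} {C : Finset (Finset ℤ)} (hCS : C ⊆ SS j) :
    C.image Finset.card ⊆ Finset.Icc 1 j := by
  intro c hc
  obtain ⟨u, hu, rfl⟩ := Finset.mem_image.1 hc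
  have hu' := mem_SS.1 (hCS hu)
  simp only [Finset.mem_Icc]
  exact ⟨Finset.card_pos.2 hu'.1, hu'.2.card_le⟩

lemma chain_cards_card {C : Finset (Finset ℤ)}
    (hch : ∀ u ∈ C, ∀ v ∈ C, u ⊆ v ∨ v ⊆ u) :
    (C.image Finset.card).card = C.card :=
  Finset.card_image_of_injOn (chain_cards_injOn hch)

lemma chain_cards_full {j : ℕ} {C : Finset (Finset ℤ)} (hCS : C ⊆ SS j)
    (hch : ∀ u ∈ C, ∀ v ∈ C, u ⊆ v ∨ v ⊆ u) (hcard : C.card = j) :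
    C.image Finset.card = Finset.Icc 1 j := by
  apply Finset.eq_of_subset_of_card_le (chain_cards_sub hCS)
  rw [chain_cards_card hch, hcard]
  simp

/-- a full-support member of `SS j` has an element of absolute value `j`. -/
lemma full_abs {j : ℕ} (hj : 1 ≤ j) {y : Finset ℤ} (hy : y ∈ SS j) (hyc : y.card = j) :
    ∃ a ∈ y, a.natAbs = j := by
  have hyS := (mem_SS.1 hy).2
  have habs : y.image Int.natAbs = Finset.Icc 1 j := by
    apply Finset.eq_of_subset_of_card_le
    · intro c hc
      obtain ⟨a, ha, rfl⟩ := Finset.mem_image.1 hc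
      obtain ⟨h1, h2⟩ := hyS.1 a ha
      simp only [Finset.mem_Icc]
      omega
    · rw [Finset.card_image_of_injOn (fun a ha b hb h => hyS.absInj a ha b hb h), hyc]
      simp
  have : j ∈ y.image Int.natAbs := by rw [habs]; simp; omega
  obtain ⟨a, ha, haj⟩ := Finset.mem_image.1 this
  exact ⟨a, ha, haj⟩

/-- a full chain in the `j`-sphere has a member of full support, containing `j` or `-j`. -/
lemma chain_full_top {j : ℕ} (hj : 1 ≤ j) {C : Finset (Finset ℤ)}
    (hC : C ∈ chainsIn j (SS j)) : ∃ y ∈ C, ∃ a ∈ y, a.natAbs = j := by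
  obtain ⟨hCS, hcard, hch⟩ := mem_chainsIn.1 hC
  have hfull := chain_cards_full hCS hch hcard
  have : j ∈ C.image Finset.card := by rw [hfull]; simp; omega
  obtain ⟨y, hy, hyc⟩ := Finset.mem_image.1 this
  obtain ⟨a, ha, haj⟩ := full_abs hj (hCS hy) hyc
  exact ⟨y, hy, a, ha, haj⟩

lemma eq_insert_of_subset_card {α : Type*} [DecidableEq α] {x y : Finset α} (h : y ⊆ x) (hc : x.card = y.card + 1) :
    ∃ w, w ∉ y ∧ w ∈ x ∧ x = insert w y := by
  have h1 : (x \ y).card = 1 := by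
    rw [Finset.card_sdiff_of_subset h]
    omega
  obtain ⟨w, hw⟩ := Finset.card_eq_one.1 h1
  have hwx : w ∈ x \ y := by rw [hw]; simp
  refine ⟨w, (Finset.mem_sdiff.1 hwx).2, (Finset.mem_sdiff.1 hwx).1, ?_⟩
  have := Finset.sdiff_union_of_subset h
  rw [hw] at this
  rw [← this, Finset.insert_eq]

/-- the extension set of a codimension-1 chain in the ball -/
noncomputable def ExtSet (j : ℕ) (F : Finset (Finset ℤ)) : Finset (Finset ℤ) :=
  (Uball j).filter (fun x => x ∉ F ∧ ∀ u ∈ F, u ⊆ x ∨ x ⊆ u)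

/-- Pseudomanifold-with-boundary property: codim-1 chains extend in exactly
2 ways, except boundary ones which extend in exactly 1 way. -/
lemma ext_count {j : ℕ} (hj : 1 ≤ j) {F : Finset (Finset ℤ)}
    (hF : F ∈ chainsIn (j-1) (Uball j)) :
    (ExtSet j F).card = if (∀ y ∈ F, y ∈ SS (j-1)) then 1 else 2 := by
  obtain ⟨hFU, hcard, hch⟩ := mem_chainsIn.1 hF
  have hFS : F ⊆ SS j := fun u hu => (mem_Uball.1 (hFU hu)).1
  have hlin := chain_linear hch
  set K := F.image Finset.card with hK
  have hKsub : K ⊆ Finset.Icc 1 j := chain_cards_sub hFS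
  have hKcard : K.card = j - 1 := by rw [hK, chain_cards_card hch, hcard]
  have hdiff : ((Finset.Icc 1 j) \ K).card = 1 := by
    rw [Finset.card_sdiff_of_subset hKsub, hKcard, Nat.card_Icc]
    omega
  obtain ⟨g, hg⟩ := Finset.card_eq_one.1 hdiff
  have hgmem : g ∈ (Finset.Icc 1 j) \ K := by rw [hg]; simp
  have hgIcc : 1 ≤ g ∧ g ≤ j := by
    have := (Finset.mem_sdiff.1 hgmem).1
    simpa using this
  have hgK : g ∉ K := (Finset.mem_sdiff.1 hgmem).2
  have hKmem : ∀ c, 1 ≤ c → c ≤ j → c ≠ g → c ∈ K := by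
    intro c h1 h2 h3
    by_contra hc
    have : c ∈ (Finset.Icc 1 j) \ K := Finset.mem_sdiff.2 ⟨by simp; omega, hc⟩
    rw [hg] at this
    simp at this
    exact h3 this
  have hxcards : ∀ x ∈ ExtSet j F, x.card = g := by
    intro x hx
    obtain ⟨hxU, hxF, hxcomp⟩ := Finset.mem_filter.1 hx
    obtain ⟨hxS, hxj⟩ := mem_Uball.1 hxU
    have h1 : 1 ≤ x.card := Finset.card_pos.2 (mem_SS.1 hxS).1
    have h2 : x.card ≤ j := (mem_SS.1 hxS).2.card_le
    by_contra hne
    have : x.card ∈ K := hKmem _ h1 h2 hne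
    obtain ⟨u, hu, huc⟩ := Finset.mem_image.1 this
    have : u = x := by
      rcases hxcomp u hu with h | h
      · exact Finset.eq_of_subset_of_card_le h (by omega)
      · exact (Finset.eq_of_subset_of_card_le h (by omega)).symm
    exact hxF (this ▸ hu)
  by_cases hgj : g = j
  · -- the missing cardinality is at the top
    subst hgj
    rcases Nat.eq_or_lt_of_le hgIcc.1 with hj1 | hj2
    · -- j = 1 (recall g = j) : F is empty
      have hj1' : g = 1 := hj1.symm
      have hFe : F = ∅ := by
        rw [← Finset.card_eq_zero, hcard]
        omega
      have hUb : Uball g = {({1} : Finset ℤ)} := by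
        ext x
        simp only [mem_Uball, mem_SS, Finset.mem_singleton]
        constructor
        · rintro ⟨⟨⟨a, ha⟩, hS⟩, hm1⟩
          have ha1 : a = 1 := by
            obtain ⟨h1, h2⟩ := hS.1 a ha
            rw [hj1'] at h2
            have : a = 1 ∨ a = -1 := by omega
            rcases this with rfl | rfl
            · rfl
            · rw [hj1'] at hm1
              norm_num at hm1
              exact absurd ha hm1
          subst ha1
          apply Finset.Subset.antisymm
          · intro b hb
            obtain ⟨h1, h2⟩ := hS.1 b hb
            rw [hj1'] at h2
            have : b = 1 ∨ b = -1 := by omega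
            rcases this with rfl | rfl
            · simp
            · rw [hj1'] at hm1
              norm_num at hm1
              exact absurd hb hm1
          · simpa using ha
        · rintro rfl
          rw [hj1']
          refine ⟨⟨⟨1, by simp⟩, ⟨?_, ?_⟩⟩, by norm_num⟩
          · intro a ha
            simp only [Finset.mem_singleton] at ha
            subst ha
            norm_num
          · intro a ha
            simp only [Finset.mem_singleton] at ha
            subst ha
            norm_num
      have hExt : ExtSet g F = Uball g := by
        unfold ExtSet
        apply Finset.filter_true_of_mem
        intro x hx
        rw [hFe]
        simp
      rw [hExt, hUb, if_pos (by rw [hFe]; simp)]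
      simp
    · -- j ≥ 2 : there is a top member y of cardinality j - 1
      have hj2' : 2 ≤ g := hj2
      have htK : g - 1 ∈ K := hKmem _ (by omega) (by omega) (by omega)
      obtain ⟨y, hy, hyc⟩ := Finset.mem_image.1 htK
      have htopmax : ∀ u ∈ F, u ⊆ y := by
        intro u hu
        apply hlin u hu y hy
        have h1 : u.card ∈ K := Finset.mem_image_of_mem _ hu
        have h2 := hKsub h1
        simp only [Finset.mem_Icc] at h2
        have : u.card ≠ g := fun h => hgK (h ▸ h1)
        omega
      have hyS := (mem_SS.1 (hFS hy)).2
      have hynj : -(g:ℤ) ∉ y := (mem_Uball.1 (hFU hy)).2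
      set A := y.image Int.natAbs with hA
      have hAsub : A ⊆ Finset.Icc 1 g := by
        intro c hc
        obtain ⟨a, ha, rfl⟩ := Finset.mem_image.1 hc
        obtain ⟨h1, h2⟩ := hyS.1 a ha
        simp only [Finset.mem_Icc]
        omega
      have hAcard : A.card = g - 1 := by
        rw [hA, Finset.card_image_of_injOn (fun a ha b hb h => hyS.absInj a ha b hb h), hyc]
      have hvdiff : ((Finset.Icc 1 g) \ A).card = 1 := by
        rw [Finset.card_sdiff_of_subset hAsub, hAcard, Nat.card_Icc]
        omega
      obtain ⟨v, hv⟩ := Finset.card_eq_one.1 hvdiff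
      have hvmem : v ∈ (Finset.Icc 1 g) \ A := by rw [hv]; simp
      have hvIcc : 1 ≤ v ∧ v ≤ g := by
        have := (Finset.mem_sdiff.1 hvmem).1
        simpa using this
      have hvA : v ∉ A := (Finset.mem_sdiff.1 hvmem).2
      have hAmem : ∀ c, 1 ≤ c → c ≤ g → c ≠ v → c ∈ A := by
        intro c h1 h2 h3
        by_contra hc
        have : c ∈ (Finset.Icc 1 g) \ A := Finset.mem_sdiff.2 ⟨by simp; omega, hc⟩
        rw [hv] at this
        simp at this
        exact h3 this
      -- any extension is insert w y with |w| = v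
      have hmain : ∀ x ∈ ExtSet g F, ∃ w, x = insert w y ∧ w ∉ y ∧ w.natAbs = v ∧
          (v = g → w = (g:ℤ)) := by
        intro x hx
        obtain ⟨hxU, hxF, hxcomp⟩ := Finset.mem_filter.1 hx
        obtain ⟨hxS, hxj⟩ := mem_Uball.1 hxU
        have hxc := hxcards x hx
        have hyx : y ⊆ x := by
          rcases hxcomp y hy with h | h
          · exact h
          · exfalso
            have := Finset.card_le_card h
            omega
        obtain ⟨w, hw1, hw2, hw3⟩ := eq_insert_of_subset_card hyx (by omega)
        have hwabs : w.natAbs = v := by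
          have h1 : w.natAbs ∉ A := by
            intro hc
            obtain ⟨a, ha, hab⟩ := Finset.mem_image.1 hc
            have := (mem_SS.1 hxS).2.absInj a (hyx ha) w hw2 hab
            exact hw1 (this ▸ ha)
          obtain ⟨hwz, hwle⟩ := (mem_SS.1 hxS).2.1 w hw2
          by_contra hne
          exact h1 (hAmem _ (by omega) (by omega) hne)
        refine ⟨w, hw3, hw1, hwabs, ?_⟩
        intro hvg
        rw [hvg] at hwabs
        have : w = (g:ℤ) ∨ w = -(g:ℤ) := by omega
        rcases this with rfl | rfl
        · rfl
        · exact absurd (hw3 ▸ Finset.mem_insert_self _ _ : -(g:ℤ) ∈ x) hxj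
      -- conversely, inserting a valid `w` gives an extension
      have hins : ∀ w : ℤ, w.natAbs = v → w ≠ -(g:ℤ) → insert w y ∈ ExtSet g F := by
        intro w hwabs hwg
        have hwz : w ≠ 0 := by omega
        have hwy : w ∉ y := by
          intro hc
          exact hvA (hwabs ▸ Finset.mem_image_of_mem _ hc)
        have hxS : SSet g (insert w y) := by
          constructor
          · intro a ha
            rcases Finset.mem_insert.1 ha with rfl | ha'
            · exact ⟨hwz, by omega⟩
            · exact hyS.1 a ha'
          · intro a ha hc
            rcases Finset.mem_insert.1 ha with rfl | ha'
            · rcases Finset.mem_insert.1 hc with h | h'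
              · omega
              · exact hvA (by
                  have h2 : (-a).natAbs = v := by omega
                  exact h2 ▸ Finset.mem_image_of_mem _ h')
            · rcases Finset.mem_insert.1 hc with h | h'
              · exact hvA (by
                  have h2 : a.natAbs = v := by omega
                  exact h2 ▸ Finset.mem_image_of_mem _ ha')
              · exact hyS.2 a ha' h'
        refine Finset.mem_filter.2 ⟨mem_Uball.2 ⟨mem_SS.2 ⟨⟨w, Finset.mem_insert_self _ _⟩, hxS⟩, ?_⟩, ?_, ?_⟩
        · intro hc
          rcases Finset.mem_insert.1 hc with h | h'
          · exact hwg h.symm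
          · exact hynj h'
        · intro hc
          have hKin : (insert w y).card ∈ K := Finset.mem_image_of_mem _ hc
          rw [Finset.card_insert_of_notMem hwy, hyc] at hKin
          have heq : g - 1 + 1 = g := by omega
          rw [heq] at hKin
          exact hgK hKin
        · intro u hu
          exact Or.inl ((htopmax u hu).trans (Finset.subset_insert _ _))
      by_cases hvg : v = g
      · -- boundary case : the unique extension is insert g y
        have hbd : ∀ u ∈ F, u ∈ SS (g-1) := by
          intro u hu
          have huy := htopmax u hu
          rw [mem_SS]
          refine ⟨(mem_SS.1 (hFS hu)).1, ⟨?_, fun a ha => (mem_SS.1 (hFS hu)).2.2 a ha⟩⟩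
          intro a ha
          obtain ⟨h1, h2⟩ := hyS.1 a (huy ha)
          refine ⟨h1, ?_⟩
          have : a.natAbs ≠ g := by
            intro hc
            exact hvA (hvg ▸ hc ▸ Finset.mem_image_of_mem _ (huy ha))
          omega
        rw [if_pos hbd]
        have : ExtSet g F = {insert ((g:ℤ)) y} := by
          apply Finset.Subset.antisymm
          · intro x hx
            obtain ⟨w, hw1, hw2, hw3, hw4⟩ := hmain x hx
            rw [Finset.mem_singleton, hw1, hw4 hvg]
          · intro x hx
            rw [Finset.mem_singleton] at hx
            subst hx
            exact hins (g:ℤ) (by rw [hvg]; simp) (by omega)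
        rw [this]
        simp
      · -- interior case : two extensions insert (±v) y
        have hnbd : ¬ (∀ u ∈ F, u ∈ SS (g-1)) := by
          intro hc
          have hgA : g ∈ A := hAmem g (by omega) le_rfl (Ne.symm hvg)
          obtain ⟨a, ha, hag⟩ := Finset.mem_image.1 hgA
          have := (mem_SS.1 (hc y hy)).2.1 a ha
          omega
        rw [if_neg hnbd]
        have hvz : ((v:ℤ)).natAbs = v := by simp
        have hvnz : ((-(v:ℤ))).natAbs = v := by simp
        have : ExtSet g F = {insert ((v:ℤ)) y, insert (-(v:ℤ)) y} := by
          apply Finset.Subset.antisymm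
          · intro x hx
            obtain ⟨w, hw1, hw2, hw3, hw4⟩ := hmain x hx
            have : w = (v:ℤ) ∨ w = -(v:ℤ) := by omega
            rcases this with rfl | rfl
            · rw [hw1]; simp
            · rw [hw1]; simp
          · intro x hx
            rcases Finset.mem_insert.1 hx with rfl | hx'
            · exact hins ((v:ℤ)) (by simp) (by omega)
            · rw [Finset.mem_singleton] at hx'
              subst hx'
              exact hins (-(v:ℤ)) (by simp) (by omega)
        rw [this]
        rw [Finset.card_insert_of_notMem, Finset.card_singleton]
        intro hc
        rw [Finset.mem_singleton] at hc
        have h1 : (v:ℤ) ∈ insert (-(v:ℤ)) y := hc ▸ Finset.mem_insert_self _ _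
        rcases Finset.mem_insert.1 h1 with h | h'
        · omega
        · exact hvA (by rw [hA]; exact Finset.mem_image.2 ⟨_, h', by simp⟩)
  · -- the missing cardinality is interior (g < j)
    have hgj' : g < j := lt_of_le_of_ne hgIcc.2 hgj
    have hzK : g + 1 ∈ K := hKmem _ (by omega) (by omega) (by omega)
    obtain ⟨z, hz, hzc⟩ := Finset.mem_image.1 hzK
    have hzS := (mem_SS.1 (hFS hz)).2
    set base := (F.filter (fun u => u.card < g)).sup id with hbase
    have hbase_mem : ∀ a : ℤ, a ∈ base ↔ ∃ u ∈ F, u.card < g ∧ a ∈ u := by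
      intro a
      rw [hbase, Finset.mem_sup]
      constructor
      · rintro ⟨u, hu, ha⟩
        obtain ⟨h1, h2⟩ := Finset.mem_filter.1 hu
        exact ⟨u, h1, h2, ha⟩
      · rintro ⟨u, h1, h2, ha⟩
        exact ⟨u, Finset.mem_filter.2 ⟨h1, h2⟩, ha⟩
    have hbase_sub : base ⊆ z := by
      intro a ha
      obtain ⟨u, hu, huc, hau⟩ := (hbase_mem a).1 ha
      exact hlin u hu z hz (by omega) hau
    have hbase_low : ∀ u ∈ F, u.card < g → u ⊆ base := fun u hu huc a ha =>
      (hbase_mem a).2 ⟨u, hu, huc, ha⟩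
    have hbase_card : base.card = g - 1 := by
      rcases Nat.eq_or_lt_of_le hgIcc.1 with hg1 | hg2
      · have hbe : base = ∅ := by
          apply Finset.eq_empty_of_forall_notMem
          intro a ha
          obtain ⟨u, hu, huc, -⟩ := (hbase_mem a).1 ha
          have := Finset.card_pos.2 (mem_SS.1 (hFS hu)).1
          omega
        rw [hbe]
        simp
        omega
      · have hyK : g - 1 ∈ K := hKmem _ (by omega) (by omega) (by omega)
        obtain ⟨y, hy, hyc⟩ := Finset.mem_image.1 hyK
        have : base = y := by
          apply Finset.Subset.antisymm
          · intro a ha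
            obtain ⟨u, hu, huc, hau⟩ := (hbase_mem a).1 ha
            exact hlin u hu y hy (by omega) hau
          · exact hbase_low y hy (by omega)
        rw [this, hyc]
    have hbz_card : (z \ base).card = 2 := by
      rw [Finset.card_sdiff_of_subset hbase_sub, hzc, hbase_card]
      omega
    have hmain : ExtSet j F = (z \ base).image (fun w => insert w base) := by
      apply Finset.Subset.antisymm
      · intro x hx
        obtain ⟨hxU, hxF, hxcomp⟩ := Finset.mem_filter.1 hx
        have hxc := hxcards x hx
        have hbx : base ⊆ x := by
          intro a ha
          obtain ⟨u, hu, huc, hau⟩ := (hbase_mem a).1 ha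
          rcases hxcomp u hu with h | h
          · exact h hau
          · exfalso
            have := Finset.card_le_card h
            omega
        have hxz : x ⊆ z := by
          rcases hxcomp z hz with h | h
          · exact absurd (Finset.eq_of_subset_of_card_le h (by omega))
              (fun he => hxF (he ▸ hz))
          · exact h
        obtain ⟨w, hw1, hw2, hw3⟩ := eq_insert_of_subset_card hbx (by omega)
        exact Finset.mem_image.2 ⟨w, Finset.mem_sdiff.2 ⟨hxz hw2, hw1⟩, hw3.symm⟩
      · intro x hx
        obtain ⟨w, hw, rfl⟩ := Finset.mem_image.1 hx
        obtain ⟨hwz, hwb⟩ := Finset.mem_sdiff.1 hw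
        have hxsub : insert w base ⊆ z := Finset.insert_subset hwz hbase_sub
        have hxcard : (insert w base).card = g := by
          rw [Finset.card_insert_of_notMem hwb, hbase_card]
          omega
        refine Finset.mem_filter.2 ⟨mem_Uball.2 ⟨mem_SS.2 ⟨⟨w, Finset.mem_insert_self _ _⟩,
          SSet.subset hxsub hzS⟩, fun hc => (mem_Uball.1 (hFU hz)).2 (hxsub hc)⟩, ?_, ?_⟩
        · intro hc
          have : g ∈ K := by
            rw [← hxcard]
            exact Finset.mem_image_of_mem _ hc
          exact hgK this
        · intro u hu
          have h1 : u.card ∈ K := Finset.mem_image_of_mem _ hu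
          have h2 := hKsub h1
          simp only [Finset.mem_Icc] at h2
          have hne : u.card ≠ g := fun h => hgK (h ▸ h1)
          rcases Nat.lt_or_ge u.card g with h | h
          · exact Or.inl ((hbase_low u hu h).trans (Finset.subset_insert _ _))
          · exact Or.inr (hxsub.trans (hlin z hz u hu (by omega)))
    have hnbd : ¬ (∀ u ∈ F, u ∈ SS (j-1)) := by
      have hjK : j ∈ K := hKmem _ (by omega) le_rfl (Ne.symm hgj)
      obtain ⟨y, hy, hyc⟩ := Finset.mem_image.1 hjK
      obtain ⟨a, ha, haj⟩ := full_abs (by omega) (hFS hy) hyc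
      intro hc
      have := (mem_SS.1 (hc y hy)).2.1 a ha
      omega
    rw [if_neg hnbd, hmain]
    rw [Finset.card_image_of_injOn, hbz_card]
    intro w hw w' hw' h
    simp only [Finset.coe_sdiff, Set.mem_diff, Finset.mem_coe] at hw hw'
    have h' : insert w base = insert w' base := h
    have : w ∈ insert w' base := h' ▸ Finset.mem_insert_self w base
    rcases Finset.mem_insert.1 this with h' | h'
    · exact h'
    · exact absurd h' hw.2

end ChainStruct

section Parity

variable (lab : Finset ℤ → ℤ)

/-- count of positive alternating full chains in the `j`-sphere -/
noncomputable def Pcount (j : ℕ) : ℕ := ((chainsIn j (SS j)).filter (AltC lab 1)).card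

/-- count of alternating full chains in the `j`-ball -/
noncomputable def Acount (j : ℕ) : ℕ :=
  ((chainsIn j (Uball j)).filter (fun C => AltC lab 1 C ∨ AltC lab (-1) C)).card

lemma Pcount_zero : Pcount lab 0 = 1 := by
  unfold Pcount
  have h1 : chainsIn 0 (SS 0) = {(∅ : Finset (Finset ℤ))} := by
    ext C
    rw [mem_chainsIn]
    simp only [Finset.mem_singleton]
    constructor
    · rintro ⟨-, hc, -⟩
      exact Finset.card_eq_zero.1 hc
    · rintro rfl
      exact ⟨by simp, by simp, by simp⟩
  rw [h1]
  rw [Finset.filter_singleton, if_pos]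
  · simp
  · constructor <;> simp [AltC]

variable {n : ℕ}
variable (hnz : ∀ x ∈ SS n, lab x ≠ 0)
  (hcomp : ∀ x ∈ SS n, ∀ y ∈ SS n, x ⊆ y → lab x ≠ -lab y)

set_option maxHeartbeats 2000000 in
include hnz hcomp in
/-- combinatorial Stokes : the parity of alternating full chains in the ball equals
the parity of positive alternating full chains on the boundary sphere. -/
lemma stokes {j : ℕ} (hj : 1 ≤ j) (hjn : j ≤ n) :
    Acount lab j % 2 = Pcount lab (j-1) % 2 := by
  classical
  set S := ((chainsIn j (Uball j)) ×ˢ (chainsIn (j-1) (Uball j))).filter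
    (fun q => q.2 ⊆ q.1 ∧ AltC lab 1 q.2) with hS
  have hUS : Uball j ⊆ SS n := fun x hx => SS_mono hjn (mem_Uball.1 hx).1
  -- Step A : fiberwise count over the first component
  have hstepA : S.card = ∑ C ∈ chainsIn j (Uball j),
      (C.filter (fun v => AltC lab 1 (C.erase v))).card := by
    rw [Finset.card_eq_sum_card_fiberwise (f := Prod.fst) (t := chainsIn j (Uball j))
      (fun q hq => (Finset.mem_product.1 (Finset.mem_filter.1 hq).1).1)]
    apply Finset.sum_congr rfl
    intro C hC
    obtain ⟨hCU, hCcard, hCch⟩ := mem_chainsIn.1 hC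
    refine (Finset.card_bij (i := fun v _ => ((C, C.erase v) : Finset (Finset ℤ) × Finset (Finset ℤ))) ?_ ?_ ?_).symm
    · intro v hv
      obtain ⟨hvC, hvAlt⟩ := Finset.mem_filter.1 hv
      refine Finset.mem_filter.2 ⟨Finset.mem_filter.2 ⟨Finset.mem_product.2 ⟨hC, ?_⟩,
        Finset.erase_subset _ _, hvAlt⟩, rfl⟩
      rw [mem_chainsIn]
      exact ⟨(Finset.erase_subset _ _).trans hCU,
        by rw [Finset.card_erase_of_mem hvC, hCcard],
        fun u hu w hw => hCch u (Finset.mem_of_mem_erase hu) w (Finset.mem_of_mem_erase hw)⟩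
    · intro v hv v' hv' h
      have h2 : C.erase v = C.erase v' := congrArg Prod.snd h
      exact (Finset.erase_inj C (Finset.mem_of_mem_filter _ hv)).1 h2
    · rintro ⟨C', F⟩ hq
      obtain ⟨hqS, hq1⟩ := Finset.mem_filter.1 hq
      simp only at hq1
      subst hq1
      obtain ⟨hqP, hqsub, hqAlt⟩ := Finset.mem_filter.1 hqS
      obtain ⟨-, hqFC⟩ := Finset.mem_product.1 hqP
      have hFcard : F.card = j - 1 := (mem_chainsIn.1 hqFC).2.1
      have hqsub' : F ⊆ C' := hqsub
      obtain ⟨w, hw1, hw2, hw3⟩ := eq_insert_of_subset_card hqsub'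
        (by rw [hFcard, hCcard]; omega)
      have hCe : C'.erase w = F := by rw [hw3, Finset.erase_insert hw1]
      refine ⟨w, Finset.mem_filter.2 ⟨hw2, ?_⟩, ?_⟩
      · rwa [hCe]
      · simp only [Prod.mk.injEq]
        exact ⟨trivial, hCe⟩
  -- Step B : fiberwise count over the second component
  have hstepB : S.card = ∑ F ∈ chainsIn (j-1) (Uball j),
      (if AltC lab 1 F then (ExtSet j F).card else 0) := by
    rw [Finset.card_eq_sum_card_fiberwise (f := Prod.snd) (t := chainsIn (j-1) (Uball j))
      (fun q hq => (Finset.mem_product.1 (Finset.mem_filter.1 hq).1).2)]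
    apply Finset.sum_congr rfl
    intro F hF
    obtain ⟨hFU, hFcard, hFch⟩ := mem_chainsIn.1 hF
    by_cases hAlt : AltC lab 1 F
    · rw [if_pos hAlt]
      refine (Finset.card_bij (i := fun x _ => ((insert x F, F) : Finset (Finset ℤ) × Finset (Finset ℤ))) ?_ ?_ ?_).symm
      · intro x hx
        obtain ⟨hxU, hxF, hxcomp⟩ := Finset.mem_filter.1 hx
        refine Finset.mem_filter.2 ⟨Finset.mem_filter.2 ⟨Finset.mem_product.2 ⟨?_, hF⟩,
          Finset.subset_insert _ _, hAlt⟩, rfl⟩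
        rw [mem_chainsIn]
        refine ⟨?_, ?_, ?_⟩
        · intro u hu
          rcases Finset.mem_insert.1 hu with rfl | hu'
          · exact hxU
          · exact hFU hu'
        · rw [Finset.card_insert_of_notMem hxF, hFcard]
          omega
        · intro u hu v hv
          rcases Finset.mem_insert.1 hu with rfl | hu' <;> rcases Finset.mem_insert.1 hv with rfl | hv'
          · exact Or.inl Finset.Subset.rfl
          · exact (hxcomp v hv').symm
          · exact hxcomp u hu'
          · exact hFch u hu' v hv'
      · intro x hx x' hx' h
        have h2 : insert x F = insert x' F := congrArg Prod.fst h
        have hxF : x ∉ F := (Finset.mem_filter.1 hx).2.1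
        have hxF' : x' ∉ F := (Finset.mem_filter.1 hx').2.1
        have : x ∈ insert x' F := h2 ▸ Finset.mem_insert_self x F
        rcases Finset.mem_insert.1 this with h' | h'
        · exact h'
        · exact absurd h' hxF
      · rintro ⟨C', F'⟩ hq
        obtain ⟨hqS, hq1⟩ := Finset.mem_filter.1 hq
        simp only at hq1
        subst hq1
        obtain ⟨hqP, hqsub, hqAlt⟩ := Finset.mem_filter.1 hqS
        obtain ⟨hqCH, -⟩ := Finset.mem_product.1 hqP
        obtain ⟨hCU, hCcard, hCch⟩ := mem_chainsIn.1 hqCH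
        have hqsub' : F' ⊆ C' := hqsub
        obtain ⟨w, hw1, hw2, hw3⟩ := eq_insert_of_subset_card hqsub'
          (by rw [hFcard, hCcard]; omega)
        refine ⟨w, Finset.mem_filter.2 ⟨hCU hw2, hw1, fun u hu => hCch u (hqsub hu) w hw2⟩, ?_⟩
        exact Prod.ext (by simpa using hw3.symm) rfl
    · rw [if_neg hAlt, Finset.card_eq_zero, Finset.filter_eq_empty_iff]
      rintro ⟨C', F'⟩ hq
      obtain ⟨-, -, hqAlt⟩ := Finset.mem_filter.1 hq
      simp only
      intro h
      exact hAlt (h ▸ hqAlt)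
  -- evaluate both sides mod 2
  have hper : ∀ C ∈ chainsIn j (Uball j),
      (C.filter (fun v => AltC lab 1 (C.erase v))).card % 2 =
      (if (AltC lab 1 C ∨ AltC lab (-1) C) then 1 else 0) := by
    intro C hC
    obtain ⟨hCU, hCcard, hCch⟩ := mem_chainsIn.1 hC
    exact chain_face_parity lab hnz hcomp (fun u hu => hUS (hCU hu)) hCch
      (Finset.card_pos.1 (by omega))
  have final1 : Acount lab j % 2 = S.card % 2 := by
    rw [hstepA, Finset.sum_nat_mod, Finset.sum_congr rfl hper]
    unfold Acount
    rw [Finset.card_filter]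
  have hper2 : ∀ F ∈ chainsIn (j-1) (Uball j),
      (if AltC lab 1 F then (ExtSet j F).card else 0) % 2 =
      (if (AltC lab 1 F ∧ ∀ y ∈ F, y ∈ SS (j-1)) then 1 else 0) := by
    intro F hF
    by_cases hAlt : AltC lab 1 F
    · rw [if_pos hAlt, ext_count hj hF]
      by_cases hbd : ∀ y ∈ F, y ∈ SS (j-1)
      · rw [if_pos hbd, if_pos ⟨hAlt, hbd⟩]
      · rw [if_neg hbd, if_neg (by tauto)]
    · rw [if_neg hAlt, if_neg (by tauto)]
  have hset : (chainsIn (j-1) (Uball j)).filter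
        (fun F => AltC lab 1 F ∧ ∀ y ∈ F, y ∈ SS (j-1)) =
      (chainsIn (j-1) (SS (j-1))).filter (AltC lab 1) := by
    ext F
    simp only [Finset.mem_filter, mem_chainsIn]
    constructor
    · rintro ⟨⟨h1, h2, h3⟩, h4, h5⟩
      exact ⟨⟨fun u hu => h5 u hu, h2, h3⟩, h4⟩
    · rintro ⟨⟨h1, h2, h3⟩, h4⟩
      have hj1 : (j - 1) + 1 = j := by omega
      refine ⟨⟨fun u hu => ?_, h2, h3⟩, h4, fun y hy => h1 hy⟩
      have := SS_subset_Uball (h1 hu)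
      rwa [hj1] at this
  have final2 : Pcount lab (j-1) % 2 = S.card % 2 := by
    rw [hstepB, Finset.sum_nat_mod, Finset.sum_congr rfl hper2]
    unfold Pcount
    rw [← hset, Finset.card_filter]
  rw [final1, final2]

variable (hodd : ∀ x ∈ SS n, lab (negF x) = -lab x)

/-- negation of a chain -/
noncomputable def negC (C : Finset (Finset ℤ)) : Finset (Finset ℤ) := C.image negF

lemma negF_injective : Function.Injective negF := fun x y h => by
  rw [← negF_negF x, h, negF_negF]

@[simp] lemma negC_negC (C : Finset (Finset ℤ)) : negC (negC C) = C := by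
  unfold negC
  rw [Finset.image_image]
  have : negF ∘ negF = id := funext negF_negF
  rw [this, Finset.image_id]

lemma mem_negC {C : Finset (Finset ℤ)} {x : Finset ℤ} : x ∈ negC C ↔ negF x ∈ C := by
  unfold negC
  rw [Finset.mem_image]
  constructor
  · rintro ⟨y, hy, rfl⟩
    rwa [negF_negF]
  · intro h
    exact ⟨negF x, h, negF_negF x⟩

lemma negC_mem_chainsIn {t j : ℕ} {C : Finset (Finset ℤ)} (hC : C ∈ chainsIn t (SS j)) :
    negC C ∈ chainsIn t (SS j) := by
  obtain ⟨h1, h2, h3⟩ := mem_chainsIn.1 hC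
  rw [mem_chainsIn]
  refine ⟨?_, ?_, ?_⟩
  · intro x hx
    rw [mem_negC] at hx
    have := h1 hx
    have h4 := negF_mem_SS this
    rwa [negF_negF] at h4
  · rw [negC, Finset.card_image_of_injective _ negF_injective, h2]
  · intro u hu v hv
    rw [mem_negC] at hu hv
    rcases h3 _ hu _ hv with h | h
    · exact Or.inl (by
        have := negF_subset h
        rwa [negF_negF, negF_negF] at this)
    · exact Or.inr (by
        have := negF_subset h
        rwa [negF_negF, negF_negF] at this)

include hodd in
lemma image_lab_negC {C : Finset (Finset ℤ)} (hC : ∀ x ∈ C, x ∈ SS n) :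
    (negC C).image lab = negF (C.image lab) := by
  ext a
  rw [mem_negF, Finset.mem_image]
  constructor
  · rintro ⟨x, hx, rfl⟩
    rw [mem_negC] at hx
    refine Finset.mem_image.2 ⟨negF x, hx, ?_⟩
    have := hodd (negF x) (hC _ hx)
    rw [negF_negF] at this
    omega
  · intro h
    obtain ⟨x, hx, hlab⟩ := Finset.mem_image.1 h
    refine ⟨negF x, mem_negC.2 (by rwa [negF_negF]), ?_⟩
    rw [hodd x (hC x hx)]
    omega

include hodd in
lemma altC_negC {s : ℤ} {C : Finset (Finset ℤ)} (hC : ∀ x ∈ C, x ∈ SS n)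
    (h : AltC lab s C) : AltC lab (-s) (negC C) := by
  obtain ⟨h1, h2⟩ := h
  constructor
  · rw [image_lab_negC lab hodd hC, card_negF, h1, negC,
      Finset.card_image_of_injective _ negF_injective]
  · rw [image_lab_negC lab hodd hC]
    exact alt_negF _ _ h2

set_option maxHeartbeats 4000000 in
include hnz hcomp hodd in
/-- the sphere count equals the ball count, via the negation symmetry. -/
lemma P_eq_A {j : ℕ} (hj : 1 ≤ j) (hjn : j ≤ n) : Pcount lab j = Acount lab j := by
  classical
  have hJSS : ∀ C ∈ chainsIn j (SS j), ∀ x ∈ C, x ∈ SS n :=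
    fun C hC x hx => SS_mono hjn ((mem_chainsIn.1 hC).1 hx)
  have hsplit : ∀ C ∈ chainsIn j (SS j),
      (∃ x ∈ C, (j:ℤ) ∈ x) ∨ (∃ x ∈ C, (-(j:ℤ)) ∈ x) := by
    intro C hC
    obtain ⟨y, hy, a, ha, haj⟩ := chain_full_top hj hC
    have : a = (j:ℤ) ∨ a = -(j:ℤ) := by omega
    rcases this with rfl | rfl
    · exact Or.inl ⟨y, hy, ha⟩
    · exact Or.inr ⟨y, hy, ha⟩
  have hnotboth : ∀ C ∈ chainsIn j (SS j),
      ¬((∃ x ∈ C, (j:ℤ) ∈ x) ∧ (∃ x ∈ C, (-(j:ℤ)) ∈ x)) := by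
    rintro C hC ⟨⟨u, hu, hju⟩, ⟨w, hw, hjw⟩⟩
    obtain ⟨hCS, -, hch⟩ := mem_chainsIn.1 hC
    rcases hch u hu w hw with h | h
    · exact (mem_SS.1 (hCS hw)).2.2 (j:ℤ) (h hju) hjw
    · exact (mem_SS.1 (hCS hu)).2.2 (j:ℤ) hju (h hjw)
  have hUchar : chainsIn j (Uball j) =
      (chainsIn j (SS j)).filter (fun C => ∃ x ∈ C, (j:ℤ) ∈ x) := by
    ext C
    rw [Finset.mem_filter, mem_chainsIn, mem_chainsIn]
    constructor
    · rintro ⟨h1, h2, h3⟩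
      have hCJ : C ∈ chainsIn j (SS j) :=
        mem_chainsIn.2 ⟨fun x hx => (mem_Uball.1 (h1 hx)).1, h2, h3⟩
      refine ⟨mem_chainsIn.1 hCJ, ?_⟩
      rcases hsplit C hCJ with h | h
      · exact h
      · obtain ⟨x, hx, hjx⟩ := h
        exact absurd hjx (mem_Uball.1 (h1 hx)).2
    · rintro ⟨⟨h1, h2, h3⟩, x₀, hx₀, hjx₀⟩
      refine ⟨fun u hu => mem_Uball.2 ⟨h1 hu, fun hc => ?_⟩, h2, h3⟩
      exact hnotboth C (mem_chainsIn.2 ⟨h1, h2, h3⟩) ⟨⟨x₀, hx₀, hjx₀⟩, ⟨u, hu, hc⟩⟩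
  set J := chainsIn j (SS j) with hJ
  have claim1 : Pcount lab j =
      (J.filter (fun C => AltC lab 1 C ∧ (∃ x ∈ C, (j:ℤ) ∈ x))).card +
      (J.filter (fun C => AltC lab 1 C ∧ ¬(∃ x ∈ C, (j:ℤ) ∈ x))).card := by
    unfold Pcount
    rw [← Finset.card_filter_add_card_filter_not
      (p := fun C => ∃ x ∈ C, (j:ℤ) ∈ x) (s := J.filter (AltC lab 1))]
    rw [Finset.filter_filter, Finset.filter_filter]
  have claim2 : (J.filter (fun C => AltC lab 1 C ∧ ¬(∃ x ∈ C, (j:ℤ) ∈ x))).card =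
      (J.filter (fun C => AltC lab (-1) C ∧ (∃ x ∈ C, (j:ℤ) ∈ x))).card := by
    apply Finset.card_bij (i := fun C _ => negC C)
    · intro C hC
      obtain ⟨hC1, hC2, hC3⟩ := Finset.mem_filter.1 hC
      refine Finset.mem_filter.2 ⟨negC_mem_chainsIn hC1, ?_, ?_⟩
      · exact altC_negC lab hodd (hJSS C hC1) hC2
      · rcases hsplit C hC1 with h | h
        · exact absurd h hC3
        · obtain ⟨x, hx, hjx⟩ := h
          exact ⟨negF x, mem_negC.2 (by rwa [negF_negF]), by rw [mem_negF]; simpa using hjx⟩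
    · intro C hC C' hC' h
      have := congrArg negC h
      rwa [negC_negC, negC_negC] at this
    · intro D hD
      obtain ⟨hD1, hD2, hD3⟩ := Finset.mem_filter.1 hD
      refine ⟨negC D, Finset.mem_filter.2 ⟨negC_mem_chainsIn hD1, ?_, ?_⟩, negC_negC D⟩
      · have := altC_negC lab hodd (hJSS D hD1) hD2
        simpa using this
      · intro hcon
        obtain ⟨x, hx, hjx⟩ := hcon
        rw [mem_negC] at hx
        apply hnotboth D hD1
        refine ⟨hD3, ⟨negF x, hx, ?_⟩⟩
        rw [mem_negF]
        simpa using hjx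
  have claim3 : Acount lab j =
      (J.filter (fun C => AltC lab 1 C ∧ (∃ x ∈ C, (j:ℤ) ∈ x))).card +
      (J.filter (fun C => AltC lab (-1) C ∧ (∃ x ∈ C, (j:ℤ) ∈ x))).card := by
    unfold Acount
    rw [hUchar, Finset.filter_filter]
    have hcong : J.filter (fun C => (∃ x ∈ C, (j:ℤ) ∈ x) ∧ (AltC lab 1 C ∨ AltC lab (-1) C)) =
        (J.filter (fun C => AltC lab 1 C ∧ (∃ x ∈ C, (j:ℤ) ∈ x))) ∪
        (J.filter (fun C => AltC lab (-1) C ∧ (∃ x ∈ C, (j:ℤ) ∈ x))) := by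
      rw [← Finset.filter_or]
      apply Finset.filter_congr
      intro C hC
      constructor
      · rintro ⟨hx, h | h⟩
        · exact Or.inl ⟨h, hx⟩
        · exact Or.inr ⟨h, hx⟩
      · rintro (⟨h, hx⟩ | ⟨h, hx⟩)
        · exact ⟨hx, Or.inl h⟩
        · exact ⟨hx, Or.inr h⟩
    rw [hcong, Finset.card_union_of_disjoint]
    rw [Finset.disjoint_left]
    intro C hC1 hC2
    obtain ⟨hCJ, hCA1, -⟩ := Finset.mem_filter.1 hC1
    obtain ⟨-, hCA2, -⟩ := Finset.mem_filter.1 hC2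
    have hne : (C.image lab).Nonempty := by
      rw [← Finset.card_pos, hCA1.1, (mem_chainsIn.1 hCJ).2.1]
      omega
    exact alt_not_both hne hCA1.2 (by simpa using hCA2.2)
  rw [claim1, claim2, claim3]

include hnz hcomp hodd in
lemma Pcount_odd : ∀ j, j ≤ n → Pcount lab j % 2 = 1 := by
  intro j
  induction j with
  | zero =>
    intro _
    rw [Pcount_zero]
  | succ t iht =>
    intro h
    rw [P_eq_A lab hnz hcomp hodd (by omega) h,
      stokes lab hnz hcomp (by omega : 1 ≤ t + 1) h]
    simpa using iht (by omega)

lemma alt_absInj : ∀ (L : Finset ℤ) (s : ℤ), Alt s L →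
    ∀ a ∈ L, ∀ b ∈ L, a.natAbs = b.natAbs → a = b := by
  intro L
  induction L using Finset.strongInduction with
  | _ L ih =>
    intro s hAlt a ha b hb hab
    rw [alt_iff] at hAlt
    rcases hAlt with rfl | ⟨a₀, ha₀, h1, h2, h3⟩
    · simp at ha
    · by_cases hA : a = a₀ <;> by_cases hB : b = a₀
      · rw [hA, hB]
      · exact absurd hab (by have := h2 b hb hB; rw [hA]; omega)
      · exact absurd hab (by have := h2 a ha hA; rw [hB]; omega)
      · exact ih (L.erase a₀) (Finset.erase_ssubset ha₀) (-s) h3 a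
          (Finset.mem_erase.2 ⟨hA, ha⟩) b (Finset.mem_erase.2 ⟨hB, hb⟩) hab

include hnz hcomp hodd in
/-- The octahedral Tucker lemma. -/
theorem octTucker {m : ℕ} (hn : 1 ≤ n)
    (hbd : ∀ x ∈ SS n, (lab x).natAbs ≤ m) : n ≤ m := by
  have hodd' := Pcount_odd lab hnz hcomp hodd n le_rfl
  have hne : ((chainsIn n (SS n)).filter (AltC lab 1)).Nonempty := by
    rw [← Finset.card_pos]
    unfold Pcount at hodd'
    omega
  obtain ⟨C, hC⟩ := hne
  obtain ⟨hCJ, hCA⟩ := Finset.mem_filter.1 hC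
  obtain ⟨hCS, hCcard, hCch⟩ := mem_chainsIn.1 hCJ
  set L := C.image lab with hL
  have hLcard : L.card = n := by rw [hCA.1, hCcard]
  have habs : ∀ a ∈ L, ∀ b ∈ L, a.natAbs = b.natAbs → a = b :=
    fun a ha b hb hab => alt_absInj L 1 hCA.2 a ha b hb hab
  have hsub : L.image Int.natAbs ⊆ Finset.Icc 1 m := by
    intro c hc
    obtain ⟨a, ha, rfl⟩ := Finset.mem_image.1 hc
    obtain ⟨x, hx, rfl⟩ := Finset.mem_image.1 ha
    have h1 := hnz x (hCS hx)
    have h2 := hbd x (hCS hx)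
    simp only [Finset.mem_Icc]
    omega
  have : (L.image Int.natAbs).card = n := by
    rw [Finset.card_image_of_injOn (fun a ha b hb h => habs a ha b hb h), hLcard]
  calc n = (L.image Int.natAbs).card := this.symm
    _ ≤ (Finset.Icc 1 m).card := Finset.card_le_card hsub
    _ = m := by simp

end Parity

section Reduction

variable {p k n : ℕ} (G : Fin p → Finset ℤ → Prop)

/-- least color of a signed set -/
noncomputable def ccol (A : Finset ℤ) : ℕ := sInf {c : ℕ | ∃ hc : c < p, G ⟨c, hc⟩ A}

lemma ccol_spec {A : Finset ℤ} (h : ∃ i, G i A) :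
    ∃ hc : ccol G A < p, G ⟨ccol G A, hc⟩ A := by
  have hne : {c : ℕ | ∃ hc : c < p, G ⟨c, hc⟩ A}.Nonempty := by
    obtain ⟨i, hi⟩ := h
    exact ⟨i.1, i.2, by simpa using hi⟩
  exact Nat.sInf_mem hne

/-- candidate subsets of `x` (or of `-x`) -/
noncomputable def Cands (x : Finset ℤ) : Finset (Finset ℤ) :=
  (x.powersetCard k ∪ (negF x).powersetCard k).filter (fun A => ∃ i, G i A)

noncomputable def Mval (x : Finset ℤ) : ℕ := (Cands (k := k) G x).sup (ccol G)

/-- the max is attained on the positive side -/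
def sigmaP (x : Finset ℤ) : Prop :=
  ∃ A ∈ x.powersetCard k, (∃ i, G i A) ∧ ccol G A = Mval (k := k) G x

noncomputable def smin (x : Finset ℤ) : ℕ :=
  if h : x.Nonempty then (x.image Int.natAbs).min' (h.image _) else 0

noncomputable def sgn (x : Finset ℤ) : ℤ := if ((smin x : ℤ) ∈ x) then 1 else -1

noncomputable def labF (x : Finset ℤ) : ℤ :=
  if x.card < k then sgn x * x.card
  else (if sigmaP (k := k) G x then 1 else -1) * (k + Mval (k := k) G x)

lemma smin_spec {x : Finset ℤ} (hne : x.Nonempty) :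
    (∃ a ∈ x, a.natAbs = smin x) ∧ ∀ a ∈ x, smin x ≤ a.natAbs := by
  rw [smin, dif_pos hne]
  constructor
  · obtain ⟨a, ha, hval⟩ := Finset.mem_image.1 (Finset.min'_mem (x.image Int.natAbs) (hne.image _))
    exact ⟨a, ha, hval⟩
  · intro a ha
    exact Finset.min'_le _ _ (Finset.mem_image_of_mem _ ha)

lemma image_natAbs_negF (x : Finset ℤ) :
    (negF x).image Int.natAbs = x.image Int.natAbs := by
  ext c
  simp only [Finset.mem_image]
  constructor
  · rintro ⟨a, ha, rfl⟩
    rw [mem_negF] at ha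
    exact ⟨-a, ha, by omega⟩
  · rintro ⟨a, ha, rfl⟩
    exact ⟨-a, by rw [mem_negF]; simpa using ha, by omega⟩

lemma smin_negF (x : Finset ℤ) : smin (negF x) = smin x := by
  unfold smin
  by_cases hne : x.Nonempty
  · have hne' : (negF x).Nonempty := by
      obtain ⟨a, ha⟩ := hne
      exact ⟨-a, by rw [mem_negF]; simpa using ha⟩
    rw [dif_pos hne, dif_pos hne']
    congr 1
    exact image_natAbs_negF x
  · have hne' : ¬ (negF x).Nonempty := by
      intro h
      obtain ⟨a, ha⟩ := h
      rw [mem_negF] at ha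
      exact hne ⟨-a, ha⟩
    rw [dif_neg hne, dif_neg hne']

lemma sgn_negF {x : Finset ℤ} (hx : x ∈ SS n) : sgn (negF x) = - sgn x := by
  obtain ⟨hne, hS⟩ := mem_SS.1 hx
  obtain ⟨⟨a, ha, haval⟩, -⟩ := smin_spec hne
  have hcase : a = (smin x : ℤ) ∨ a = -(smin x : ℤ) := by omega
  have hone : ((smin x : ℤ) ∈ x) ↔ ¬ ((-(smin x : ℤ)) ∈ x) := by
    constructor
    · intro h1 h2
      exact hS.2 _ h1 h2
    · intro h2
      rcases hcase with rfl | rfl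
      · exact ha
      · exact absurd ha (by simpa using h2)
  unfold sgn
  rw [smin_negF]
  by_cases h : (smin x : ℤ) ∈ x
  · have h2 : ((smin x : ℤ)) ∉ negF x := by
      rw [mem_negF]
      exact hone.1 h
    rw [if_neg h2, if_pos h]
  · have h2 : ((smin x : ℤ)) ∈ negF x := by
      rw [mem_negF]
      by_contra hc
      exact h (hone.2 hc)
    rw [if_pos h2, if_neg h]
    norm_num

lemma cands_negF (x : Finset ℤ) : Cands (k := k) G (negF x) = Cands (k := k) G x := by
  unfold Cands
  rw [negF_negF, Finset.union_comm]

lemma mval_negF (x : Finset ℤ) : Mval (k := k) G (negF x) = Mval (k := k) G x := by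
  unfold Mval
  rw [cands_negF]

variable (hGint : ∀ (i : Fin p) B C, G i B → G i C → ∃ a, a ∈ B ∧ a ∈ C)
variable (hGcov : ∀ A : Finset ℤ, IsSignedKSubset n k A → ∃ i, G i A ∨ G i (negF A))
variable (hk : 1 ≤ k) (hkn : k ≤ n)

include hGcov hk hkn in
lemma cands_nonempty {x : Finset ℤ} (hx : x ∈ SS n) (hcard : k ≤ x.card) :
    (Cands (k := k) G x).Nonempty := by
  obtain ⟨hne, hS⟩ := mem_SS.1 hx
  obtain ⟨A, hAx, hAcard⟩ := Finset.exists_subset_card_eq hcard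
  have hAS : IsSignedKSubset n k A := ⟨hAcard, (SSet.subset hAx hS).1, (SSet.subset hAx hS).2⟩
  obtain ⟨i, hi | hi⟩ := hGcov A hAS
  · exact ⟨A, Finset.mem_filter.2 ⟨Finset.mem_union_left _
      (Finset.mem_powersetCard.2 ⟨hAx, hAcard⟩), i, hi⟩⟩
  · exact ⟨negF A, Finset.mem_filter.2 ⟨Finset.mem_union_right _
      (Finset.mem_powersetCard.2 ⟨negF_subset hAx, by rw [card_negF, hAcard]⟩), i, hi⟩⟩

include hGint in
lemma not_both_sides {x : Finset ℤ} (hx : x ∈ SS n) {M : ℕ}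
    (h1 : ∃ A ∈ x.powersetCard k, (∃ i, G i A) ∧ ccol G A = M)
    (h2 : ∃ B ∈ (negF x).powersetCard k, (∃ i, G i B) ∧ ccol G B = M) : False := by
  obtain ⟨A, hAmem, hAcov, hAcol⟩ := h1
  obtain ⟨B, hBmem, hBcov, hBcol⟩ := h2
  obtain ⟨hcA, hGA⟩ := ccol_spec G hAcov
  obtain ⟨hcB, hGB⟩ := ccol_spec G hBcov
  have hfin : (⟨ccol G B, hcB⟩ : Fin p) = ⟨ccol G A, hcA⟩ := by
    apply Fin.ext
    simp [hAcol, hBcol]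
  obtain ⟨a, haA, haB⟩ := hGint _ A B hGA (hfin ▸ hGB)
  have hax : a ∈ x := (Finset.mem_powersetCard.1 hAmem).1 haA
  have hanx : a ∈ negF x := (Finset.mem_powersetCard.1 hBmem).1 haB
  rw [mem_negF] at hanx
  exact (mem_SS.1 hx).2.2 a hax hanx

include hGint hGcov hk hkn in
lemma sigma_or {x : Finset ℤ} (hx : x ∈ SS n) (hcard : k ≤ x.card) :
    (sigmaP (k := k) G x ↔ ¬ sigmaP (k := k) G (negF x)) := by
  have hMneg := mval_negF (k := k) G x
  have htot : sigmaP (k := k) G x ∨ sigmaP (k := k) G (negF x) := by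
    obtain ⟨A, hA, hAval⟩ := Finset.exists_mem_eq_sup _
      (cands_nonempty G hGcov hk hkn hx hcard) (ccol G)
    have hAval' : ccol G A = Mval (k := k) G x := by
      unfold Mval
      exact hAval.symm
    obtain ⟨hAU, hAcov⟩ := Finset.mem_filter.1 hA
    rcases Finset.mem_union.1 hAU with h | h
    · exact Or.inl ⟨A, h, hAcov, hAval'⟩
    · exact Or.inr ⟨A, h, hAcov, by rw [hMneg]; exact hAval'⟩
  have hnotboth : ¬ (sigmaP (k := k) G x ∧ sigmaP (k := k) G (negF x)) := by
    rintro ⟨hs1, hs2⟩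
    apply not_both_sides G hGint hx (M := Mval (k := k) G x) hs1
    obtain ⟨B, hB, hBcov, hBval⟩ := hs2
    exact ⟨B, hB, hBcov, by rwa [hMneg] at hBval⟩
  tauto

include hGint hGcov hk hkn in
lemma labF_odd {x : Finset ℤ} (hx : x ∈ SS n) : labF (k := k) G (negF x) = - labF (k := k) G x := by
  unfold labF
  rw [card_negF]
  by_cases hc : x.card < k
  · rw [if_pos hc, if_pos hc, sgn_negF hx]
    ring
  · rw [if_neg hc, if_neg hc, mval_negF]
    have := sigma_or G hGint hGcov hk hkn hx (by omega)
    by_cases hs : sigmaP (k := k) G x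
    · rw [if_pos hs, if_neg (by tauto)]
      ring
    · rw [if_neg hs, if_pos (by tauto)]
      ring

include hk in
lemma labF_nonzero {x : Finset ℤ} (hx : x ∈ SS n) : labF (k := k) G x ≠ 0 := by
  unfold labF
  have hpos : 0 < x.card := Finset.card_pos.2 (mem_SS.1 hx).1
  by_cases hc : x.card < k
  · rw [if_pos hc]
    unfold sgn
    split <;> omega
  · rw [if_neg hc]
    split <;> omega

include hGcov hk hkn in
lemma mval_le {x : Finset ℤ} (hx : x ∈ SS n) (hcard : k ≤ x.card) :
    Mval (k := k) G x ≤ p - 1 ∧ 1 ≤ p := by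
  have hne := cands_nonempty G hGcov hk hkn hx hcard
  obtain ⟨A, hA⟩ := hne
  have hp : 1 ≤ p := by
    obtain ⟨-, i, -⟩ := Finset.mem_filter.1 hA
    exact i.pos
  refine ⟨?_, hp⟩
  apply Finset.sup_le
  intro B hB
  obtain ⟨-, hBcov⟩ := Finset.mem_filter.1 hB
  obtain ⟨hcB, -⟩ := ccol_spec G hBcov
  omega

include hGcov hk hkn in
lemma labF_bound {x : Finset ℤ} (hx : x ∈ SS n) :
    (labF (k := k) G x).natAbs ≤ k - 1 + p := by
  unfold labF
  by_cases hc : x.card < k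
  · rw [if_pos hc]
    unfold sgn
    split <;> omega
  · rw [if_neg hc]
    obtain ⟨h1, h2⟩ := mval_le G hGcov hk hkn hx (by omega)
    split <;> omega

include hGint hGcov hk hkn in
lemma labF_nocomp {x y : Finset ℤ} (hx : x ∈ SS n) (hy : y ∈ SS n) (hxy : x ⊆ y) :
    labF (k := k) G x ≠ - labF (k := k) G y := by
  intro heq
  have hcardle : x.card ≤ y.card := Finset.card_le_card hxy
  have hxpos : 0 < x.card := Finset.card_pos.2 (mem_SS.1 hx).1
  have habs : (labF (k := k) G x).natAbs = (labF (k := k) G y).natAbs := by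
    rw [heq]
    simp [Int.natAbs_neg]
  by_cases hcx : x.card < k <;> by_cases hcy : y.card < k
  · -- both small
    have hax : (labF (k := k) G x).natAbs = x.card := by
      unfold labF sgn
      rw [if_pos hcx]
      split <;> omega
    have hay : (labF (k := k) G y).natAbs = y.card := by
      unfold labF sgn
      rw [if_pos hcy]
      split <;> omega
    have hcards : x.card = y.card := by omega
    have hxy' : x = y := Finset.eq_of_subset_of_card_le hxy (le_of_eq hcards.symm)
    subst hxy'
    have := labF_nonzero (k := k) G hk hx
    omega
  · -- x small, y large
    have hax : (labF (k := k) G x).natAbs = x.card := by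
      unfold labF sgn
      rw [if_pos hcx]
      split <;> omega
    have hay : (labF (k := k) G y).natAbs = k + Mval (k := k) G y := by
      unfold labF
      rw [if_neg hcy]
      split <;> omega
    omega
  · omega
  · -- both large
    have hax : (labF (k := k) G x).natAbs = k + Mval (k := k) G x := by
      unfold labF
      rw [if_neg hcx]
      split <;> omega
    have hay : (labF (k := k) G y).natAbs = k + Mval (k := k) G y := by
      unfold labF
      rw [if_neg hcy]
      split <;> omega
    have hM : Mval (k := k) G x = Mval (k := k) G y := by omega
    by_cases hsx : sigmaP (k := k) G x
    · obtain ⟨A, hAmem, hAcov, hAcol⟩ := hsx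
      have hsy : sigmaP (k := k) G y := by
        obtain ⟨hAx, hAc⟩ := Finset.mem_powersetCard.1 hAmem
        exact ⟨A, Finset.mem_powersetCard.2 ⟨hAx.trans hxy, hAc⟩, hAcov, by rw [← hM]; exact hAcol⟩
      have hsx' : sigmaP (k := k) G x := ⟨A, hAmem, hAcov, hAcol⟩
      unfold labF at heq
      rw [if_neg hcx, if_neg hcy, if_pos hsx', if_pos hsy, hM] at heq
      omega
    · have hsnx : sigmaP (k := k) G (negF x) := by
        have := sigma_or G hGint hGcov hk hkn hx (by omega)
        tauto
      by_cases hsy : sigmaP (k := k) G y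
      · obtain ⟨B, hBmem, hBcov, hBcol⟩ := hsnx
        obtain ⟨hBx, hBc⟩ := Finset.mem_powersetCard.1 hBmem
        have hBmem' : B ∈ (negF y).powersetCard k :=
          Finset.mem_powersetCard.2 ⟨hBx.trans (negF_subset hxy), hBc⟩
        have hBcol' : ccol G B = Mval (k := k) G y := by
          rw [mval_negF] at hBcol
          rw [← hM]
          exact hBcol
        exact not_both_sides G hGint hy hsy ⟨B, hBmem', hBcov, hBcol'⟩
      · unfold labF at heq
        rw [if_neg hcx, if_neg hcy, if_neg hsx, if_neg hsy, hM] at heq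
        omega

include hGint hGcov hk hkn in
lemma cover_lower_bound : n ≤ k - 1 + p :=
  octTucker (labF (k := k) G)
    (fun x hx => labF_nonzero G hk hx)
    (fun x hx y hy hxy => labF_nocomp G hGint hGcov hk hkn hx hy hxy)
    (fun x hx => labF_odd G hGint hGcov hk hkn hx)
    (le_trans hk hkn)
    (fun x hx => labF_bound G hGcov hk hkn hx)

end Reduction

section Cover

lemma exists_cover {n k p : ℕ} (f : KSVertex n k → Fin p)
    (hf : ∀ i : Fin p, IsBalancedSet (fun A B : KSVertex n k => ksPos A.1 B.1)
      (fun A B : KSVertex n k => ksNeg A.1 B.1) (f ⁻¹' {i})) :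
    ∃ G : Fin p → Finset ℤ → Prop,
      (∀ (i : Fin p) B C, G i B → G i C → ∃ a, a ∈ B ∧ a ∈ C) ∧
      (∀ A : Finset ℤ, IsSignedKSubset n k A → ∃ i, G i A ∨ G i (negF A)) := by
  choose X hX using hf
  refine ⟨fun i B => ∃ v : KSVertex n k, f v = i ∧
    ((v ∉ X i ∧ B = v.1) ∨ (v ∈ X i ∧ B = negF v.1)), ?_, ?_⟩
  · rintro i B C ⟨v, hv, hvB⟩ ⟨w, hw, hwC⟩
    have hv' : v ∈ f ⁻¹' {i} := by simp [hv]
    have hw' : w ∈ f ⁻¹' {i} := by simp [hw]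
    have hbal := hX i v hv' w hw'
    have hbal' := hX i w hw' v hv'
    by_contra hcon
    push_neg at hcon
    rcases hvB with ⟨hvX, rfl⟩ | ⟨hvX, rfl⟩ <;> rcases hwC with ⟨hwX, rfl⟩ | ⟨hwX, rfl⟩
    · have hneg : ksNeg v.1 w.1 :=
        Finset.disjoint_left.2 (fun {a} ha hb => hcon a ha hb)
      exact (hbal.2 hneg) (iff_of_false hvX hwX)
    · have hpos : ksPos v.1 w.1 := fun a ha hc =>
        hcon a ha (mem_negF.2 (by simpa using hc))
      exact hvX ((hbal.1 hpos).2 hwX)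
    · have hpos : ksPos w.1 v.1 := fun a ha hc =>
        hcon a (mem_negF.2 hc) ha
      exact hwX ((hbal'.1 hpos).2 hvX)
    · have hneg : ksNeg v.1 w.1 := Finset.disjoint_left.2 (fun a ha hb =>
        hcon (-a) (mem_negF.2 (by simpa using ha)) (mem_negF.2 (by simpa using hb)))
      exact (hbal.2 hneg) (iff_of_true hvX hwX)
  · intro A hA
    by_cases hv : (⟨A, hA⟩ : KSVertex n k) ∈ X (f ⟨A, hA⟩)
    · exact ⟨f ⟨A, hA⟩, Or.inr ⟨⟨A, hA⟩, rfl, Or.inr ⟨hv, rfl⟩⟩⟩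
    · exact ⟨f ⟨A, hA⟩, Or.inl ⟨⟨A, hA⟩, rfl, Or.inl ⟨hv, rfl⟩⟩⟩

end Cover

section Upper

variable {n k : ℕ}

lemma smin_bounds (hk : 1 ≤ k) (hkn : k ≤ n) {A : Finset ℤ} (hA : IsSignedKSubset n k A) :
    1 ≤ smin A ∧ smin A ≤ n - k + 1 ∧ (∃ a ∈ A, a.natAbs = smin A) := by
  obtain ⟨hcard, hprop, hpair⟩ := hA
  have hS : SSet n A := ⟨hprop, hpair⟩
  have hne : A.Nonempty := Finset.card_pos.1 (by omega)
  obtain ⟨⟨a, ha, haval⟩, hmin⟩ := smin_spec hne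
  have h1 : 1 ≤ smin A := by
    have := hprop a ha
    omega
  refine ⟨h1, ?_, ⟨a, ha, haval⟩⟩
  have himsub : A.image Int.natAbs ⊆ Finset.Icc (smin A) n := by
    intro c hc
    obtain ⟨b, hb, rfl⟩ := Finset.mem_image.1 hc
    simp only [Finset.mem_Icc]
    exact ⟨hmin b hb, (hprop b hb).2⟩
  have himcard : (A.image Int.natAbs).card = k := by
    rw [Finset.card_image_of_injOn (fun u hu v hv h => hS.absInj u hu v hv h), hcard]
  have := Finset.card_le_card himsub
  rw [himcard, Nat.card_Icc] at this
  omega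

/-- the coloring by minimum absolute value realizes the upper bound -/
lemma upper_mem (hk : 1 ≤ k) (hkn : k ≤ n) :
    (n - k + 1) ∈ {p : ℕ | ∃ f : KSVertex n k → Fin p,
      ∀ i : Fin p, IsBalancedSet (fun A B : KSVertex n k => ksPos A.1 B.1)
        (fun A B : KSVertex n k => ksNeg A.1 B.1) (f ⁻¹' {i})} := by
  refine ⟨fun v => ⟨smin v.1 - 1, ?_⟩, ?_⟩
  · obtain ⟨h1, h2, -⟩ := smin_bounds hk hkn v.2
    omega
  · intro i
    refine ⟨{v : KSVertex n k | (-(((i : ℕ) + 1 : ℕ)) : ℤ) ∈ v.1}, ?_⟩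
    intro u hu v hv
    -- each member of the class contains `i+1` or `-(i+1)`
    have hmem : ∀ w : KSVertex n k, w ∈ (fun v : KSVertex n k =>
        (⟨smin v.1 - 1, by obtain ⟨h1, h2, -⟩ := smin_bounds hk hkn v.2; omega⟩ : Fin (n-k+1))) ⁻¹' {i} →
        ((((i : ℕ) + 1 : ℕ) : ℤ) ∈ w.1 ∨ (-(((i : ℕ) + 1 : ℕ)) : ℤ) ∈ w.1) ∧
        ¬((((i : ℕ) + 1 : ℕ) : ℤ) ∈ w.1 ∧ (-(((i : ℕ) + 1 : ℕ)) : ℤ) ∈ w.1) := by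
      intro w hw
      obtain ⟨h1, h2, a, ha, haval⟩ := smin_bounds hk hkn w.2
      simp only [Set.mem_preimage, Set.mem_singleton_iff] at hw
      have hval : smin w.1 = (i : ℕ) + 1 := by
        have := congrArg Fin.val hw
        simp only at this
        omega
      have hcases : a = (((i : ℕ) + 1 : ℕ) : ℤ) ∨ a = (-(((i : ℕ) + 1 : ℕ)) : ℤ) := by
        rw [hval] at haval
        omega
      constructor
      · rcases hcases with rfl | rfl
        · exact Or.inl ha
        · exact Or.inr ha
      · rintro ⟨hp, hm⟩
        exact w.2.2.2 _ hp (by simpa using hm)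
    obtain ⟨hucase, hunot⟩ := hmem u hu
    obtain ⟨hvcase, hvnot⟩ := hmem v hv
    constructor
    · intro hpos
      constructor
      · intro huX
        simp only [Set.mem_setOf_eq] at huX ⊢
        rcases hvcase with h | h
        · exact absurd h (by have := hpos _ huX; simpa using this)
        · exact h
      · intro hvX
        simp only [Set.mem_setOf_eq] at hvX ⊢
        rcases hucase with h | h
        · exact absurd hvX (by have := hpos _ h; simpa using this)
        · exact h
    · intro hneg hiff
      simp only [Set.mem_setOf_eq] at hiff
      rcases hucase with h | h <;> rcases hvcase with h' | h'
      · exact Finset.disjoint_left.1 hneg h h'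
      · exact absurd (hiff.2 h') (fun hc => hunot ⟨h, hc⟩)
      · exact absurd (hiff.1 h) (fun hc => hvnot ⟨h', hc⟩)
      · exact Finset.disjoint_left.1 hneg h h'

end Upper

end SKT

/-- for all `n ≥ k ≥ 1`, `χ_b(KS(n,k)) = n−k+1`. -/
theorem signedKneser_balancedChromatic (n k : ℕ) (hk : 1 ≤ k) (hkn : k ≤ n) :
    balancedChromatic (fun A B : KSVertex n k => ksPos A.1 B.1)
        (fun A B : KSVertex n k => ksNeg A.1 B.1) = n - k + 1 := by
  unfold balancedChromatic
  apply le_antisymm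
  · exact Nat.sInf_le (SKT.upper_mem hk hkn)
  · apply le_csInf ⟨n - k + 1, SKT.upper_mem hk hkn⟩
    rintro p ⟨f, hf⟩
    obtain ⟨G, hGint, hGcov⟩ := SKT.exists_cover f hf
    have := SKT.cover_lower_bound G hGint hGcov hk hkn
    omega
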